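/- Let n ≥ 4 be an even integer, μ > 0, and let p, κ be real numbers satisfying p_0(n+μ) < p < p_Fuj((n+μ-1)/2), 0 < κ ≤ (n+μ-1)p/2 − (n+μ+1)/2, and κ > 2/(p−1) − (n+μ−1)/2, and set q = (n−1)p/2 − (n+1)/2. Assume in addition −1/2 ≤ q ≤ (n−3)/2 and p < p_Fuj(μ) = 1 + 2/μ. Let γ ∈ {0, 1/2}. Then there exists a constant C > 0 (depending only on n, μ, p, κ, γ) such that for all t ≥ 0 and r > 0, J_γ(t,r) := ∫_{τ=0}^{max(t−r,0)} ⟨τ⟩^{-μ(p-1)/2} ⟨t−τ−r⟩^{-q−1/2−γ} ( ∫_{λ=0}^{t−τ−r} ⟨λ⟩^{p/2} φ_κ(τ,λ)^p ((t−τ−r) − λ)^{-1/2} dλ ) dτ ≤ C ⟨t−r⟩^{-κ−γ}. -/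

import Mathlib

open MeasureTheory Real

/-- Japanese bracket `⟨y⟩ = 1 + |y|`. -/
noncomputable def jb (y : ℝ) : ℝ := 1 + |y|

/-- Strauss exponent: positive root of `(N-1)p² - (N+1)p - 2 = 0`. -/
noncomputable def p0 (N : ℝ) : ℝ := (N + 1 + Real.sqrt (N ^ 2 + 10 * N - 7)) / (2 * (N - 1))

/-- Fujita exponent. -/
noncomputable def pFuj (N : ℝ) : ℝ := 1 + 2 / N

/-- The weight function `φ_κ(t,r) = ⟨t+r⟩^{-1/2} ⟨t-r⟩^{-κ}`. -/
noncomputable def phi (κ t r : ℝ) : ℝ := jb (t + r) ^ (-(1 / 2 : ℝ)) * jb (t - r) ^ (-κ)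

lemma one_le_jb (y : ℝ) : 1 ≤ jb y := by
  simp [jb, abs_nonneg]

lemma jb_pos (y : ℝ) : 0 < jb y := lt_of_lt_of_le one_pos (one_le_jb y)

lemma jb_nonneg (y : ℝ) : 0 ≤ jb y := (jb_pos y).le

lemma jb_ne_zero (y : ℝ) : jb y ≠ 0 := (jb_pos y).ne'

lemma continuous_jb : Continuous jb := by
  show Continuous (fun y : ℝ => 1 + |y|)
  exact continuous_const.add continuous_abs

lemma continuous_jb_rpow (e : ℝ) : Continuous (fun y => jb y ^ e) :=
  continuous_jb.rpow_const (fun x => Or.inl (jb_ne_zero x))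

lemma jb_mono {x y : ℝ} (h : |x| ≤ |y|) : jb x ≤ jb y := by
  simpa [jb] using h

lemma jb_comm (x y : ℝ) : jb (x - y) = jb (y - x) := by
  simp [jb, abs_sub_comm]

lemma jb_rpow_pos (y e : ℝ) : 0 < jb y ^ e := Real.rpow_pos_of_pos (jb_pos y) e

lemma jb_rpow_nonneg (y e : ℝ) : 0 ≤ jb y ^ e := (jb_rpow_pos y e).le

lemma one_le_jb_rpow {y e : ℝ} (he : 0 ≤ e) : 1 ≤ jb y ^ e :=
  Real.one_le_rpow (one_le_jb y) he

lemma jb_rpow_le_one {y e : ℝ} (he : e ≤ 0) : jb y ^ e ≤ 1 := by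
  calc jb y ^ e ≤ jb y ^ (0:ℝ) := Real.rpow_le_rpow_of_exponent_le (one_le_jb y) he
  _ = 1 := Real.rpow_zero _

lemma jb_rpow_le_rpow_exp {y e f : ℝ} (h : e ≤ f) : jb y ^ e ≤ jb y ^ f :=
  Real.rpow_le_rpow_of_exponent_le (one_le_jb y) h

lemma jb_rpow_le_rpow_base {x y e : ℝ} (h : |x| ≤ |y|) (he : 0 ≤ e) :
    jb x ^ e ≤ jb y ^ e :=
  Real.rpow_le_rpow (jb_nonneg x) (jb_mono h) he

lemma jb_rpow_le_rpow_base_neg {x y e : ℝ} (h : |x| ≤ |y|) (he : e ≤ 0) :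
    jb y ^ e ≤ jb x ^ e :=
  Real.rpow_le_rpow_of_nonpos (jb_pos x) (jb_mono h) he

lemma jb_rpow_mul_rpow (y e f : ℝ) : jb y ^ e * jb y ^ f = jb y ^ (e + f) :=
  (Real.rpow_add (jb_pos y) e f).symm

/-- key two-sided comparison: if `jb d ≤ 2 * jb u` and `jb u ≤ jb d` then
`jb u ^ (-β) ≤ 2 ^ |β| * jb d ^ (-β)`. -/
lemma jb_rpow_le_scaled {u d β : ℝ} (h1 : jb d ≤ 2 * jb u) (h2 : jb u ≤ jb d) :
    jb u ^ (-β) ≤ 2 ^ |β| * jb d ^ (-β) := by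
  rcases le_or_gt 0 β with hβ | hβ
  · have habs : |β| = β := abs_of_nonneg hβ
    have hd2 : (0:ℝ) < jb d / 2 := by linarith [jb_pos d]
    have : jb d / 2 ≤ jb u := by linarith
    have h3 : jb u ^ (-β) ≤ (jb d / 2) ^ (-β) :=
      Real.rpow_le_rpow_of_nonpos hd2 this (neg_nonpos.mpr hβ)
    have h4 : (jb d / 2) ^ (-β) = 2 ^ β * jb d ^ (-β) := by
      rw [Real.div_rpow (jb_nonneg d) (by norm_num : (0:ℝ) ≤ 2)]
      rw [div_eq_mul_inv, ← Real.rpow_neg (by norm_num : (0:ℝ) ≤ 2), neg_neg]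
      ring
    rw [habs]; rw [h4] at h3; exact h3
  · have habs : |β| = -β := abs_of_neg hβ
    have h3 : jb u ^ (-β) ≤ jb d ^ (-β) :=
      Real.rpow_le_rpow (jb_nonneg u) h2 (by linarith)
    have h5 : (1:ℝ) ≤ 2 ^ |β| := Real.one_le_rpow (by norm_num) (abs_nonneg β)
    nlinarith [jb_rpow_nonneg d (-β)]

lemma jb_two_mul (x : ℝ) : jb (2 * x) ≤ 2 * jb x := by
  simp only [jb, abs_mul]
  rw [abs_of_nonneg (by norm_num : (0:ℝ) ≤ 2)]
  linarith [abs_nonneg x]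

lemma jb_half (x : ℝ) : jb x ≤ 2 * jb (x / 2) := by
  have := jb_two_mul (x / 2)
  rw [mul_div_cancel₀ x (by norm_num : (2:ℝ) ≠ 0)] at this
  -- wrong direction; prove directly
  simp only [jb, abs_div]
  rw [abs_of_nonneg (by norm_num : (0:ℝ) ≤ 2)]
  linarith [abs_nonneg x]

-- integrability of (d - u)^(-1/2) on any interval
lemma intInt_sub_sqrt (d a b : ℝ) :
    IntervalIntegrable (fun u => (d - u) ^ (-(1/2) : ℝ)) volume a b := by
  have h := (intervalIntegral.intervalIntegrable_rpow' (a := d - b) (b := d - a)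
    (r := (-(1/2) : ℝ)) (by norm_num)).comp_sub_left d
  simpa using h.symm

lemma intInt_jb_mul_sub_sqrt (β d a b : ℝ) :
    IntervalIntegrable (fun u => jb u ^ (-β) * (d - u) ^ (-(1/2) : ℝ)) volume a b :=
  (intInt_sub_sqrt d a b).continuousOn_mul (continuous_jb_rpow (-β)).continuousOn

lemma intInt_jb_jb (x y c : ℝ) (a b : ℝ) :
    IntervalIntegrable (fun v => jb v ^ (-x) * jb (c - v) ^ (-y)) volume a b := by
  apply Continuous.intervalIntegrable
  exact (continuous_jb_rpow (-x)).mul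
    ((continuous_jb_rpow (-y)).comp (continuous_const.sub continuous_id))

-- B1
lemma B1 {β : ℝ} (hβ : β < 1) {m : ℝ} (hm : 0 ≤ m) :
    ∫ u in (0:ℝ)..m, jb u ^ (-β) ≤ jb m ^ (1 - β) / (1 - β) := by
  have h1 : (∫ u in (0:ℝ)..m, jb u ^ (-β)) = ∫ u in (0:ℝ)..m, (u + 1) ^ (-β) := by
    apply intervalIntegral.integral_congr
    intro u hu
    rw [Set.uIcc_of_le hm] at hu
    have hu0 : 0 ≤ u := hu.1
    simp [jb, abs_of_nonneg hu0, add_comm]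
  rw [h1, intervalIntegral.integral_comp_add_right (fun x => x ^ (-β)) 1]
  rw [integral_rpow (Or.inl (by linarith))]
  have h2 : (0:ℝ) + 1 = 1 := by norm_num
  rw [h2, Real.one_rpow]
  have h3 : (m + 1) ^ (-β + 1) ≤ jb m ^ (1 - β) := by
    have : m + 1 = jb m := by simp [jb, abs_of_nonneg hm]; ring
    rw [this]
    apply jb_rpow_le_rpow_exp; linarith
  have h4 : (0:ℝ) < -β + 1 := by linarith
  rw [div_le_div_iff₀ h4 (by linarith : (0:ℝ) < 1 - β)]
  nlinarith [jb_rpow_pos m (1 - β)]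

-- B2
lemma B2 {β : ℝ} (hβ : 1 < β) {m : ℝ} (hm : 0 ≤ m) :
    ∫ u in (0:ℝ)..m, jb u ^ (-β) ≤ 1 / (β - 1) := by
  have h1 : (∫ u in (0:ℝ)..m, jb u ^ (-β)) = ∫ u in (0:ℝ)..m, (u + 1) ^ (-β) := by
    apply intervalIntegral.integral_congr
    intro u hu
    rw [Set.uIcc_of_le hm] at hu
    simp [jb, abs_of_nonneg hu.1, add_comm]
  rw [h1, intervalIntegral.integral_comp_add_right (fun x => x ^ (-β)) 1]
  have h0 : (0:ℝ) ∉ Set.uIcc (0 + 1 : ℝ) (m + 1) := by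
    rw [Set.uIcc_of_le (by linarith)]
    intro h; simp at h; linarith [h.1]
  rw [integral_rpow (Or.inr ⟨by intro h; rw [neg_eq_iff_eq_neg] at h; linarith, h0⟩)]
  have h2 : (0:ℝ) + 1 = 1 := by norm_num
  rw [h2, Real.one_rpow]
  have h5 : 0 < (m + 1 : ℝ) ^ (-β + 1) := Real.rpow_pos_of_pos (by linarith) _
  have h6 : ((m+1:ℝ) ^ (-β + 1) - 1) / (-β + 1) = (1 - (m+1:ℝ) ^ (-β + 1)) / (β - 1) := by
    rw [show (-β+1 : ℝ) = -(β-1) by ring, div_neg, ← neg_div, neg_sub]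
  rw [h6]
  apply div_le_div_of_nonneg_right ?_ (by linarith) |>.trans
  · exact le_refl _
  · linarith

-- B3
lemma B3 {c d : ℝ} (hcd : c ≤ d) :
    ∫ u in c..d, (d - u) ^ (-(1/2) : ℝ) = 2 * (d - c) ^ ((1/2) : ℝ) := by
  rw [intervalIntegral.integral_comp_sub_left (fun x => x ^ (-(1/2):ℝ)) d]
  rw [sub_self]
  rw [integral_rpow (Or.inl (by norm_num))]
  rw [Real.zero_rpow (by norm_num)]
  norm_num
  ring

-- helpers
lemma two_rpow_pos (e : ℝ) : 0 < (2:ℝ) ^ e := Real.rpow_pos_of_pos two_pos e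

lemma one_le_two_rpow {e : ℝ} (he : 0 ≤ e) : 1 ≤ (2:ℝ) ^ e :=
  Real.one_le_rpow one_le_two he

lemma jb_rpow_le_two_rpow {u β : ℝ} (h : jb u ≤ 2) : jb u ^ (-β) ≤ 2 ^ |β| := by
  rcases le_or_gt 0 β with hβ | hβ
  · exact (jb_rpow_le_one (neg_nonpos.mpr hβ)).trans (one_le_two_rpow (abs_nonneg β))
  · rw [abs_of_neg hβ]
    exact Real.rpow_le_rpow (jb_nonneg u) h (by linarith)

lemma two_rpow_neg_abs_le_jb_rpow {d e : ℝ} (hd : jb d ≤ 2) : (2:ℝ) ^ (-|e|) ≤ jb d ^ e := by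
  rcases le_or_gt 0 e with he | he
  · have h1 : (2:ℝ) ^ (-|e|) ≤ 1 :=
      Real.rpow_le_one_of_one_le_of_nonpos one_le_two (neg_nonpos.mpr (abs_nonneg e))
    exact h1.trans (one_le_jb_rpow he)
  · rw [abs_of_neg he, neg_neg]
    exact Real.rpow_le_rpow_of_nonpos (jb_pos d) hd (le_of_lt he)

lemma four_rpow_half : ((4:ℝ)) ^ ((1/2):ℝ) = 2 := by
  rw [show (4:ℝ) = 2 ^ (2:ℕ) by norm_num, ← Real.rpow_natCast 2 2,
    ← Real.rpow_mul (by norm_num : (0:ℝ) ≤ 2)]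
  norm_num

lemma sub_sqrt_nonneg (d u : ℝ) : 0 ≤ (d - u) ^ (-(1/2) : ℝ) := by
  rcases le_or_gt 0 (d - u) with h | h
  · exact Real.rpow_nonneg h _
  · rw [Real.rpow_def_of_neg h, show (-(1/2):ℝ) * π = -(π/2) by ring, Real.cos_neg,
      Real.cos_pi_div_two, mul_zero]

-- B4
lemma B4 {β : ℝ} (hβ : β < 1) :
    ∃ C > 0, ∀ d : ℝ, 0 ≤ d →
      (∫ u in (0:ℝ)..d, jb u ^ (-β) * (d - u) ^ (-(1/2) : ℝ)) ≤
        C * jb d ^ ((1:ℝ)/2 - β) := by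
  have hb1 : (0:ℝ) < 1 - β := by linarith
  refine ⟨2/(1-β) + 2 * 2^|β| + 2 * 2^|β| * 2^|(1:ℝ)/2 - β|,
    add_pos (add_pos (div_pos two_pos hb1) (by positivity)) (by positivity), ?_⟩
  intro d hd
  rcases le_or_gt d 1 with hd1 | hd1
  · -- small d
    have hjb2 : ∀ u ∈ Set.Icc (0:ℝ) d, jb u ≤ 2 := by
      intro u hu
      simp only [jb]
      rw [abs_of_nonneg hu.1]; linarith [hu.2]
    have hmono : (∫ u in (0:ℝ)..d, jb u ^ (-β) * (d - u) ^ (-(1/2) : ℝ)) ≤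
        ∫ u in (0:ℝ)..d, 2^|β| * (d - u) ^ (-(1/2) : ℝ) := by
      apply intervalIntegral.integral_mono_on hd (intInt_jb_mul_sub_sqrt β d 0 d)
        ((intInt_sub_sqrt d 0 d).const_mul _)
      intro u hu
      exact mul_le_mul_of_nonneg_right (jb_rpow_le_two_rpow (hjb2 u hu)) (sub_sqrt_nonneg d u)
    have hint : (∫ u in (0:ℝ)..d, 2^|β| * (d - u) ^ (-(1/2) : ℝ))
        = 2^|β| * (2 * d ^ ((1/2):ℝ)) := by
      rw [intervalIntegral.integral_const_mul, B3 hd]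
      ring_nf
    have hdh : d ^ ((1/2):ℝ) ≤ 1 := Real.rpow_le_one hd hd1 (by norm_num)
    have hlow : (2:ℝ) ^ (-|(1:ℝ)/2 - β|) ≤ jb d ^ ((1:ℝ)/2 - β) :=
      two_rpow_neg_abs_le_jb_rpow (by simp [jb, abs_of_nonneg hd]; linarith)
    have h2 : (2:ℝ)^|β| * (2 * d ^ ((1/2):ℝ)) ≤ 2 * 2^|β| := by
      nlinarith [two_rpow_pos |β|, Real.rpow_nonneg hd ((1:ℝ)/2)]
    have h3 : (2:ℝ) * 2^|β| ≤ 2 * 2^|β| * 2^|(1:ℝ)/2 - β| * jb d ^ ((1:ℝ)/2 - β) := by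
      have e1 : (2:ℝ)^|(1:ℝ)/2 - β| * (2:ℝ) ^ (-|(1:ℝ)/2 - β|) = 1 := by
        rw [← Real.rpow_add two_pos]; simp
      have e2 : (2:ℝ)^|(1:ℝ)/2-β| * jb d ^ ((1:ℝ)/2 - β) ≥ 1 := by
        calc (1:ℝ) = 2^|(1:ℝ)/2 - β| * (2:ℝ) ^ (-|(1:ℝ)/2 - β|) := e1.symm
        _ ≤ 2^|(1:ℝ)/2-β| * jb d ^ ((1:ℝ)/2 - β) :=
            mul_le_mul_of_nonneg_left hlow (two_rpow_pos _).le
      nlinarith [two_rpow_pos |β|]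
    have hC : 0 ≤ 2/(1-β) := by positivity
    calc (∫ u in (0:ℝ)..d, jb u ^ (-β) * (d - u) ^ (-(1/2) : ℝ))
        ≤ 2 * 2^|β| := hmono.trans (le_of_eq hint) |>.trans h2
      _ ≤ 2 * 2^|β| * 2^|(1:ℝ)/2 - β| * jb d ^ ((1:ℝ)/2 - β) := h3
      _ ≤ (2/(1-β) + 2 * 2^|β| + 2 * 2^|β| * 2^|(1:ℝ)/2 - β|) * jb d ^ ((1:ℝ)/2 - β) := by
          nlinarith [jb_rpow_pos d ((1:ℝ)/2 - β), two_rpow_pos |β|, two_rpow_pos |(1:ℝ)/2 - β|]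
  · -- large d
    have hd0 : (0:ℝ) ≤ d := hd
    have hhalf : (0:ℝ) ≤ d/2 := by linarith
    have hhd : d/2 ≤ d := by linarith
    have hsplit : (∫ u in (0:ℝ)..d, jb u ^ (-β) * (d - u) ^ (-(1/2) : ℝ)) =
        (∫ u in (0:ℝ)..(d/2), jb u ^ (-β) * (d - u) ^ (-(1/2) : ℝ)) +
        (∫ u in (d/2)..d, jb u ^ (-β) * (d - u) ^ (-(1/2) : ℝ)) :=
      (intervalIntegral.integral_add_adjacent_intervals
        (intInt_jb_mul_sub_sqrt β d 0 (d/2)) (intInt_jb_mul_sub_sqrt β d (d/2) d)).symm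
    -- P1
    have hP1 : (∫ u in (0:ℝ)..(d/2), jb u ^ (-β) * (d - u) ^ (-(1/2) : ℝ)) ≤
        2/(1-β) * jb d ^ ((1:ℝ)/2 - β) := by
      have hquarter : jb d / 4 ≤ d / 2 := by
        simp only [jb]; rw [abs_of_nonneg hd0]; linarith
      have hqpos : (0:ℝ) < jb d / 4 := by linarith [jb_pos d]
      have hptw : ∀ u ∈ Set.Icc (0:ℝ) (d/2),
          jb u ^ (-β) * (d - u) ^ (-(1/2) : ℝ) ≤ jb u ^ (-β) * (2 * jb d ^ (-(1/2):ℝ)) := by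
        intro u hu
        apply mul_le_mul_of_nonneg_left ?_ (jb_rpow_nonneg u (-β))
        have h1 : jb d / 4 ≤ d - u := by linarith [hu.2]
        have h2 : (d - u) ^ (-(1/2):ℝ) ≤ (jb d / 4) ^ (-(1/2):ℝ) :=
          Real.rpow_le_rpow_of_nonpos hqpos h1 (by norm_num)
        have h4h : ((4:ℝ)) ^ (-(1/2):ℝ) = 1/2 := by
          rw [Real.rpow_neg (by norm_num : (0:ℝ) ≤ 4), four_rpow_half]; norm_num
        have h3 : (jb d / 4) ^ (-(1/2):ℝ) = 2 * jb d ^ (-(1/2):ℝ) := by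
          rw [Real.div_rpow (jb_nonneg d) (by norm_num : (0:ℝ) ≤ 4), h4h]
          ring
        rw [h3] at h2; exact h2
      calc (∫ u in (0:ℝ)..(d/2), jb u ^ (-β) * (d - u) ^ (-(1/2) : ℝ))
          ≤ ∫ u in (0:ℝ)..(d/2), jb u ^ (-β) * (2 * jb d ^ (-(1/2):ℝ)) := by
            apply intervalIntegral.integral_mono_on hhalf (intInt_jb_mul_sub_sqrt β d 0 (d/2))
              (((continuous_jb_rpow (-β)).mul continuous_const).intervalIntegrable _ _) hptw
        _ = (∫ u in (0:ℝ)..(d/2), jb u ^ (-β)) * (2 * jb d ^ (-(1/2):ℝ)) :=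
            intervalIntegral.integral_mul_const _ _
        _ ≤ (jb (d/2) ^ (1 - β) / (1-β)) * (2 * jb d ^ (-(1/2):ℝ)) := by
            exact mul_le_mul_of_nonneg_right (B1 hβ hhalf)
              (mul_nonneg (by norm_num) (jb_rpow_nonneg _ _))
        _ ≤ (jb d ^ (1 - β) / (1-β)) * (2 * jb d ^ (-(1/2):ℝ)) := by
            apply mul_le_mul_of_nonneg_right ?_
              (mul_nonneg (by norm_num) (jb_rpow_nonneg _ _))
            apply div_le_div_of_nonneg_right ?_ hb1.le
            apply jb_rpow_le_rpow_base ?_ (by linarith)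
            rw [abs_of_nonneg hhalf, abs_of_nonneg hd0]; linarith
        _ = 2/(1-β) * jb d ^ ((1:ℝ)/2 - β) := by
            have hme : jb d ^ (-(1/2):ℝ) * jb d ^ (1-β) = jb d ^ ((1:ℝ)/2 - β) := by
              rw [jb_rpow_mul_rpow, show (-(1/2) + (1 - β) : ℝ) = (1:ℝ)/2 - β by ring]
            rw [← hme]; ring
    -- P2
    have hP2 : (∫ u in (d/2)..d, jb u ^ (-β) * (d - u) ^ (-(1/2) : ℝ)) ≤
        2 * 2^|β| * jb d ^ ((1:ℝ)/2 - β) := by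
      have hptw : ∀ u ∈ Set.Icc (d/2) d,
          jb u ^ (-β) * (d - u) ^ (-(1/2) : ℝ) ≤
            (2^|β| * jb d ^ (-β)) * (d - u) ^ (-(1/2) : ℝ) := by
        intro u hu
        apply mul_le_mul_of_nonneg_right ?_ (sub_sqrt_nonneg d u)
        apply jb_rpow_le_scaled
        · simp only [jb]
          rw [abs_of_nonneg hd0, abs_of_nonneg (le_trans hhalf hu.1)]
          linarith [hu.1]
        · apply jb_mono
          rw [abs_of_nonneg hd0, abs_of_nonneg (le_trans hhalf hu.1)]
          exact hu.2
      calc (∫ u in (d/2)..d, jb u ^ (-β) * (d - u) ^ (-(1/2) : ℝ))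
          ≤ ∫ u in (d/2)..d, (2^|β| * jb d ^ (-β)) * (d - u) ^ (-(1/2) : ℝ) := by
            apply intervalIntegral.integral_mono_on hhd (intInt_jb_mul_sub_sqrt β d (d/2) d)
              ((intInt_sub_sqrt d (d/2) d).const_mul _) hptw
        _ = (2^|β| * jb d ^ (-β)) * (2 * (d - d/2) ^ ((1/2):ℝ)) := by
            rw [intervalIntegral.integral_const_mul, B3 hhd]
        _ ≤ (2^|β| * jb d ^ (-β)) * (2 * jb d ^ ((1/2):ℝ)) := by
            apply mul_le_mul_of_nonneg_left ?_
              (mul_nonneg (two_rpow_pos _).le (jb_rpow_nonneg _ _))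
            have : d - d/2 ≤ jb d := by
              simp only [jb]; rw [abs_of_nonneg hd0]; linarith
            have h9 : (d - d/2 : ℝ) ^ ((1/2):ℝ) ≤ jb d ^ ((1/2):ℝ) :=
              Real.rpow_le_rpow (by linarith) this (by norm_num)
            linarith
        _ = 2 * 2^|β| * (jb d ^ (-β) * jb d ^ ((1/2):ℝ)) := by ring
        _ = 2 * 2^|β| * jb d ^ ((1:ℝ)/2 - β) := by
            rw [jb_rpow_mul_rpow, show (-β + (1:ℝ)/2 : ℝ) = (1:ℝ)/2 - β by ring]
    rw [hsplit]
    have hrest : 0 ≤ 2 * 2^|β| * 2^|(1:ℝ)/2 - β| * jb d ^ ((1:ℝ)/2 - β) :=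
      mul_nonneg (by positivity) (jb_rpow_nonneg _ _)
    nlinarith [jb_rpow_pos d ((1:ℝ)/2 - β)]

-- B5
lemma B5 {β : ℝ} (hβ : 1 < β) :
    ∃ C > 0, ∀ d : ℝ, 0 ≤ d →
      (∫ u in (0:ℝ)..d, jb u ^ (-β) * (d - u) ^ (-(1/2) : ℝ)) ≤
        C * jb d ^ (-(1/2) : ℝ) := by
  have hb1 : (0:ℝ) < β - 1 := by linarith
  refine ⟨2/(β-1) + 2 * 2^|β| + 4,
    by have h1 : (0:ℝ) < 2/(β-1) := div_pos two_pos hb1; positivity, ?_⟩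
  intro d hd
  rcases le_or_gt d 1 with hd1 | hd1
  · -- small d
    have hmono : (∫ u in (0:ℝ)..d, jb u ^ (-β) * (d - u) ^ (-(1/2) : ℝ)) ≤
        ∫ u in (0:ℝ)..d, (d - u) ^ (-(1/2) : ℝ) := by
      apply intervalIntegral.integral_mono_on hd (intInt_jb_mul_sub_sqrt β d 0 d)
        (intInt_sub_sqrt d 0 d)
      intro u hu
      have h1 : jb u ^ (-β) ≤ 1 := jb_rpow_le_one (by linarith)
      nlinarith [sub_sqrt_nonneg d u]
    rw [B3 hd, show (d - (0:ℝ)) = d by ring] at hmono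
    have hdh : d ^ ((1/2):ℝ) ≤ 1 := Real.rpow_le_one hd hd1 (by norm_num)
    have hlow : (2:ℝ) ^ (-(1/2):ℝ) ≤ jb d ^ (-(1/2):ℝ) := by
      apply Real.rpow_le_rpow_of_nonpos (jb_pos d) ?_ (by norm_num)
      simp only [jb]; rw [abs_of_nonneg hd]; linarith
    have h12 : (1/2 : ℝ) ≤ (2:ℝ) ^ (-(1/2):ℝ) := by
      have := Real.rpow_le_rpow_of_exponent_le (x := 2) one_le_two
        (by norm_num : (-1 : ℝ) ≤ -(1/2))
      rwa [Real.rpow_neg_one, show ((2:ℝ)⁻¹) = 1/2 by norm_num] at this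
    have hC0 : (0:ℝ) ≤ 2/(β-1) + 2 * 2^|β| := by
      have h1 : (0:ℝ) < 2/(β-1) := div_pos two_pos hb1
      positivity
    nlinarith [jb_rpow_pos d (-(1/2):ℝ), Real.rpow_nonneg hd ((1/2):ℝ)]
  · -- large d
    have hd0 : (0:ℝ) ≤ d := hd
    have hhalf : (0:ℝ) ≤ d/2 := by linarith
    have hhd : d/2 ≤ d := by linarith
    have hsplit : (∫ u in (0:ℝ)..d, jb u ^ (-β) * (d - u) ^ (-(1/2) : ℝ)) =
        (∫ u in (0:ℝ)..(d/2), jb u ^ (-β) * (d - u) ^ (-(1/2) : ℝ)) +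
        (∫ u in (d/2)..d, jb u ^ (-β) * (d - u) ^ (-(1/2) : ℝ)) :=
      (intervalIntegral.integral_add_adjacent_intervals
        (intInt_jb_mul_sub_sqrt β d 0 (d/2)) (intInt_jb_mul_sub_sqrt β d (d/2) d)).symm
    have hP1 : (∫ u in (0:ℝ)..(d/2), jb u ^ (-β) * (d - u) ^ (-(1/2) : ℝ)) ≤
        2/(β-1) * jb d ^ (-(1/2):ℝ) := by
      have hquarter : jb d / 4 ≤ d / 2 := by
        simp only [jb]; rw [abs_of_nonneg hd0]; linarith
      have hqpos : (0:ℝ) < jb d / 4 := by linarith [jb_pos d]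
      have hptw : ∀ u ∈ Set.Icc (0:ℝ) (d/2),
          jb u ^ (-β) * (d - u) ^ (-(1/2) : ℝ) ≤ jb u ^ (-β) * (2 * jb d ^ (-(1/2):ℝ)) := by
        intro u hu
        apply mul_le_mul_of_nonneg_left ?_ (jb_rpow_nonneg u (-β))
        have h1 : jb d / 4 ≤ d - u := by linarith [hu.2]
        have h2 : (d - u) ^ (-(1/2):ℝ) ≤ (jb d / 4) ^ (-(1/2):ℝ) :=
          Real.rpow_le_rpow_of_nonpos hqpos h1 (by norm_num)
        have h4h : ((4:ℝ)) ^ (-(1/2):ℝ) = 1/2 := by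
          rw [Real.rpow_neg (by norm_num : (0:ℝ) ≤ 4), four_rpow_half]; norm_num
        have h3 : (jb d / 4) ^ (-(1/2):ℝ) = 2 * jb d ^ (-(1/2):ℝ) := by
          rw [Real.div_rpow (jb_nonneg d) (by norm_num : (0:ℝ) ≤ 4), h4h]
          ring
        rw [h3] at h2; exact h2
      calc (∫ u in (0:ℝ)..(d/2), jb u ^ (-β) * (d - u) ^ (-(1/2) : ℝ))
          ≤ ∫ u in (0:ℝ)..(d/2), jb u ^ (-β) * (2 * jb d ^ (-(1/2):ℝ)) := by
            apply intervalIntegral.integral_mono_on hhalf (intInt_jb_mul_sub_sqrt β d 0 (d/2))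
              (((continuous_jb_rpow (-β)).mul continuous_const).intervalIntegrable _ _) hptw
        _ = (∫ u in (0:ℝ)..(d/2), jb u ^ (-β)) * (2 * jb d ^ (-(1/2):ℝ)) :=
            intervalIntegral.integral_mul_const _ _
        _ ≤ (1/(β-1)) * (2 * jb d ^ (-(1/2):ℝ)) := by
            exact mul_le_mul_of_nonneg_right (B2 hβ hhalf)
              (mul_nonneg (by norm_num) (jb_rpow_nonneg _ _))
        _ = 2/(β-1) * jb d ^ (-(1/2):ℝ) := by ring
    have hP2 : (∫ u in (d/2)..d, jb u ^ (-β) * (d - u) ^ (-(1/2) : ℝ)) ≤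
        2 * 2^|β| * jb d ^ (-(1/2):ℝ) := by
      have hptw : ∀ u ∈ Set.Icc (d/2) d,
          jb u ^ (-β) * (d - u) ^ (-(1/2) : ℝ) ≤
            (2^|β| * jb d ^ (-β)) * (d - u) ^ (-(1/2) : ℝ) := by
        intro u hu
        apply mul_le_mul_of_nonneg_right ?_ (sub_sqrt_nonneg d u)
        apply jb_rpow_le_scaled
        · simp only [jb]
          rw [abs_of_nonneg hd0, abs_of_nonneg (le_trans hhalf hu.1)]
          linarith [hu.1]
        · apply jb_mono
          rw [abs_of_nonneg hd0, abs_of_nonneg (le_trans hhalf hu.1)]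
          exact hu.2
      calc (∫ u in (d/2)..d, jb u ^ (-β) * (d - u) ^ (-(1/2) : ℝ))
          ≤ ∫ u in (d/2)..d, (2^|β| * jb d ^ (-β)) * (d - u) ^ (-(1/2) : ℝ) := by
            apply intervalIntegral.integral_mono_on hhd (intInt_jb_mul_sub_sqrt β d (d/2) d)
              ((intInt_sub_sqrt d (d/2) d).const_mul _) hptw
        _ = (2^|β| * jb d ^ (-β)) * (2 * (d - d/2) ^ ((1/2):ℝ)) := by
            rw [intervalIntegral.integral_const_mul, B3 hhd]
        _ ≤ (2^|β| * jb d ^ (-β)) * (2 * jb d ^ ((1/2):ℝ)) := by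
            apply mul_le_mul_of_nonneg_left ?_
              (mul_nonneg (two_rpow_pos _).le (jb_rpow_nonneg _ _))
            have h8 : d - d/2 ≤ jb d := by
              simp only [jb]; rw [abs_of_nonneg hd0]; linarith
            have h9 : (d - d/2 : ℝ) ^ ((1/2):ℝ) ≤ jb d ^ ((1/2):ℝ) :=
              Real.rpow_le_rpow (by linarith) h8 (by norm_num)
            linarith
        _ = 2 * 2^|β| * (jb d ^ (-β) * jb d ^ ((1/2):ℝ)) := by ring
        _ = 2 * 2^|β| * jb d ^ ((1:ℝ)/2 - β) := by
            rw [jb_rpow_mul_rpow, show (-β + (1:ℝ)/2 : ℝ) = (1:ℝ)/2 - β by ring]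
        _ ≤ 2 * 2^|β| * jb d ^ (-(1/2):ℝ) := by
            apply mul_le_mul_of_nonneg_left (jb_rpow_le_rpow_exp (by linarith))
              (by positivity)
    rw [hsplit]
    nlinarith [jb_rpow_pos d (-(1/2):ℝ)]

-- B6
lemma B6 {x y : ℝ} (hx : x < 1) (hy : y < 1) :
    ∃ C > 0, ∀ s : ℝ, 0 ≤ s →
      (∫ v in (0:ℝ)..s, jb v ^ (-x) * jb (s - v) ^ (-y)) ≤
        C * jb s ^ (1 - x - y) := by
  have hx1 : (0:ℝ) < 1 - x := by linarith
  have hy1 : (0:ℝ) < 1 - y := by linarith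
  refine ⟨2^|y|/(1-x) + 2^|x|/(1-y),
    add_pos (div_pos (two_rpow_pos _) hx1) (div_pos (two_rpow_pos _) hy1), ?_⟩
  intro s hs
  have hhalf : (0:ℝ) ≤ s/2 := by linarith
  have hhs : s/2 ≤ s := by linarith
  have hsplit : (∫ v in (0:ℝ)..s, jb v ^ (-x) * jb (s - v) ^ (-y)) =
      (∫ v in (0:ℝ)..(s/2), jb v ^ (-x) * jb (s - v) ^ (-y)) +
      (∫ v in (s/2)..s, jb v ^ (-x) * jb (s - v) ^ (-y)) :=
    (intervalIntegral.integral_add_adjacent_intervals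
      (intInt_jb_jb x y s 0 (s/2)) (intInt_jb_jb x y s (s/2) s)).symm
  have key1 : ∀ v ∈ Set.Icc (0:ℝ) (s/2), jb (s - v) ^ (-y) ≤ 2^|y| * jb s ^ (-y) := by
    intro v hv
    apply jb_rpow_le_scaled
    · simp only [jb]
      rw [abs_of_nonneg hs, abs_of_nonneg (by linarith [hv.1, hv.2] : (0:ℝ) ≤ s - v)]
      linarith [hv.2]
    · apply jb_mono
      rw [abs_of_nonneg hs, abs_of_nonneg (by linarith [hv.1, hv.2] : (0:ℝ) ≤ s - v)]
      linarith [hv.1]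
  have key2 : ∀ v ∈ Set.Icc (s/2) s, jb v ^ (-x) ≤ 2^|x| * jb s ^ (-x) := by
    intro v hv
    apply jb_rpow_le_scaled
    · simp only [jb]
      rw [abs_of_nonneg hs, abs_of_nonneg (by linarith [hv.1] : (0:ℝ) ≤ v)]
      linarith [hv.1]
    · apply jb_mono
      rw [abs_of_nonneg hs, abs_of_nonneg (by linarith [hv.1] : (0:ℝ) ≤ v)]
      exact hv.2
  have hP1 : (∫ v in (0:ℝ)..(s/2), jb v ^ (-x) * jb (s - v) ^ (-y)) ≤
      2^|y|/(1-x) * jb s ^ (1 - x - y) := by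
    calc (∫ v in (0:ℝ)..(s/2), jb v ^ (-x) * jb (s - v) ^ (-y))
        ≤ ∫ v in (0:ℝ)..(s/2), jb v ^ (-x) * (2^|y| * jb s ^ (-y)) := by
          apply intervalIntegral.integral_mono_on hhalf (intInt_jb_jb x y s 0 (s/2))
            (((continuous_jb_rpow (-x)).mul continuous_const).intervalIntegrable _ _)
          intro v hv
          exact mul_le_mul_of_nonneg_left (key1 v hv) (jb_rpow_nonneg v (-x))
      _ = (∫ v in (0:ℝ)..(s/2), jb v ^ (-x)) * (2^|y| * jb s ^ (-y)) :=
          intervalIntegral.integral_mul_const _ _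
      _ ≤ (jb (s/2) ^ (1-x)/(1-x)) * (2^|y| * jb s ^ (-y)) :=
          mul_le_mul_of_nonneg_right (B1 hx hhalf)
            (mul_nonneg (two_rpow_pos _).le (jb_rpow_nonneg _ _))
      _ ≤ (jb s ^ (1-x)/(1-x)) * (2^|y| * jb s ^ (-y)) := by
          apply mul_le_mul_of_nonneg_right ?_
            (mul_nonneg (two_rpow_pos _).le (jb_rpow_nonneg _ _))
          apply div_le_div_of_nonneg_right ?_ hx1.le
          apply jb_rpow_le_rpow_base ?_ (by linarith)
          rw [abs_of_nonneg hhalf, abs_of_nonneg hs]; linarith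
      _ = 2^|y|/(1-x) * jb s ^ (1 - x - y) := by
          have hme : jb s ^ (1-x) * jb s ^ (-y) = jb s ^ (1 - x - y) := by
            rw [jb_rpow_mul_rpow, show ((1-x) + -y : ℝ) = 1 - x - y by ring]
          rw [← hme]; ring
  have hP2 : (∫ v in (s/2)..s, jb v ^ (-x) * jb (s - v) ^ (-y)) ≤
      2^|x|/(1-y) * jb s ^ (1 - x - y) := by
    calc (∫ v in (s/2)..s, jb v ^ (-x) * jb (s - v) ^ (-y))
        ≤ ∫ v in (s/2)..s, (2^|x| * jb s ^ (-x)) * jb (s - v) ^ (-y) := by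
          apply intervalIntegral.integral_mono_on hhs (intInt_jb_jb x y s (s/2) s)
            (Continuous.intervalIntegrable (by
              exact continuous_const.mul ((continuous_jb_rpow (-y)).comp
                (continuous_const.sub continuous_id))) _ _)
          intro v hv
          exact mul_le_mul_of_nonneg_right (key2 v hv) (jb_rpow_nonneg _ (-y))
      _ = (2^|x| * jb s ^ (-x)) * ∫ v in (s/2)..s, jb (s - v) ^ (-y) :=
          intervalIntegral.integral_const_mul _ _
      _ ≤ (2^|x| * jb s ^ (-x)) * (jb s ^ (1-y)/(1-y)) := by
          apply mul_le_mul_of_nonneg_left ?_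
            (mul_nonneg (two_rpow_pos _).le (jb_rpow_nonneg _ _))
          have hsub : (∫ v in (s/2)..s, jb (s - v) ^ (-y)) =
              ∫ u in (0:ℝ)..(s/2), jb u ^ (-y) := by
            rw [intervalIntegral.integral_comp_sub_left (fun u => jb u ^ (-y)) s,
              sub_self, show s - s/2 = s/2 by ring]
          rw [hsub]
          calc (∫ u in (0:ℝ)..(s/2), jb u ^ (-y)) ≤ jb (s/2) ^ (1-y)/(1-y) := B1 hy hhalf
            _ ≤ jb s ^ (1-y)/(1-y) := by
                apply div_le_div_of_nonneg_right ?_ hy1.le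
                apply jb_rpow_le_rpow_base ?_ (by linarith)
                rw [abs_of_nonneg hhalf, abs_of_nonneg hs]; linarith
      _ = 2^|x|/(1-y) * jb s ^ (1 - x - y) := by
          have hme : jb s ^ (-x) * jb s ^ (1-y) = jb s ^ (1 - x - y) := by
            rw [jb_rpow_mul_rpow, show (-x + (1-y) : ℝ) = 1 - x - y by ring]
          rw [← hme]; ring
  rw [hsplit]; linarith

-- B7
lemma B7 {y β : ℝ} (hy : y < 1) (hβ : 1 < β) :
    ∃ C > 0, ∀ s : ℝ, 0 ≤ s →
      (∫ w in (0:ℝ)..s, jb (s - w) ^ (-y) * jb w ^ (-β)) ≤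
        C * jb s ^ (-y) := by
  have hy1 : (0:ℝ) < 1 - y := by linarith
  have hb1 : (0:ℝ) < β - 1 := by linarith
  refine ⟨2^|y|/(β-1) + 2^|β|/(1-y),
    add_pos (div_pos (two_rpow_pos _) hb1) (div_pos (two_rpow_pos _) hy1), ?_⟩
  intro s hs
  have hhalf : (0:ℝ) ≤ s/2 := by linarith
  have hhs : s/2 ≤ s := by linarith
  have hint : ∀ a b : ℝ, IntervalIntegrable
      (fun w => jb (s - w) ^ (-y) * jb w ^ (-β)) volume a b := by
    intro a b
    apply Continuous.intervalIntegrable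
    exact (((continuous_jb_rpow (-y)).comp (continuous_const.sub continuous_id))).mul
      (continuous_jb_rpow (-β))
  have hsplit : (∫ w in (0:ℝ)..s, jb (s - w) ^ (-y) * jb w ^ (-β)) =
      (∫ w in (0:ℝ)..(s/2), jb (s - w) ^ (-y) * jb w ^ (-β)) +
      (∫ w in (s/2)..s, jb (s - w) ^ (-y) * jb w ^ (-β)) :=
    (intervalIntegral.integral_add_adjacent_intervals (hint 0 (s/2)) (hint (s/2) s)).symm
  have key1 : ∀ w ∈ Set.Icc (0:ℝ) (s/2), jb (s - w) ^ (-y) ≤ 2^|y| * jb s ^ (-y) := by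
    intro w hw
    apply jb_rpow_le_scaled
    · simp only [jb]
      rw [abs_of_nonneg hs, abs_of_nonneg (by linarith [hw.1, hw.2] : (0:ℝ) ≤ s - w)]
      linarith [hw.2]
    · apply jb_mono
      rw [abs_of_nonneg hs, abs_of_nonneg (by linarith [hw.1, hw.2] : (0:ℝ) ≤ s - w)]
      linarith [hw.1]
  have key2 : ∀ w ∈ Set.Icc (s/2) s, jb w ^ (-β) ≤ 2^|β| * jb s ^ (-β) := by
    intro w hw
    apply jb_rpow_le_scaled
    · simp only [jb]
      rw [abs_of_nonneg hs, abs_of_nonneg (by linarith [hw.1] : (0:ℝ) ≤ w)]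
      linarith [hw.1]
    · apply jb_mono
      rw [abs_of_nonneg hs, abs_of_nonneg (by linarith [hw.1] : (0:ℝ) ≤ w)]
      exact hw.2
  have hP1 : (∫ w in (0:ℝ)..(s/2), jb (s - w) ^ (-y) * jb w ^ (-β)) ≤
      2^|y|/(β-1) * jb s ^ (-y) := by
    calc (∫ w in (0:ℝ)..(s/2), jb (s - w) ^ (-y) * jb w ^ (-β))
        ≤ ∫ w in (0:ℝ)..(s/2), (2^|y| * jb s ^ (-y)) * jb w ^ (-β) := by
          apply intervalIntegral.integral_mono_on hhalf (hint 0 (s/2))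
            (Continuous.intervalIntegrable
              (continuous_const.mul (continuous_jb_rpow (-β))) _ _)
          intro w hw
          exact mul_le_mul_of_nonneg_right (key1 w hw) (jb_rpow_nonneg _ (-β))
      _ = (2^|y| * jb s ^ (-y)) * ∫ w in (0:ℝ)..(s/2), jb w ^ (-β) :=
          intervalIntegral.integral_const_mul _ _
      _ ≤ (2^|y| * jb s ^ (-y)) * (1/(β-1)) :=
          mul_le_mul_of_nonneg_left (B2 hβ hhalf)
            (mul_nonneg (two_rpow_pos _).le (jb_rpow_nonneg _ _))
      _ = 2^|y|/(β-1) * jb s ^ (-y) := by ring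
  have hP2 : (∫ w in (s/2)..s, jb (s - w) ^ (-y) * jb w ^ (-β)) ≤
      2^|β|/(1-y) * jb s ^ (-y) := by
    calc (∫ w in (s/2)..s, jb (s - w) ^ (-y) * jb w ^ (-β))
        ≤ ∫ w in (s/2)..s, jb (s - w) ^ (-y) * (2^|β| * jb s ^ (-β)) := by
          apply intervalIntegral.integral_mono_on hhs (hint (s/2) s)
            (Continuous.intervalIntegrable
              (((continuous_jb_rpow (-y)).comp (continuous_const.sub continuous_id)).mul
                continuous_const) _ _)
          intro w hw
          exact mul_le_mul_of_nonneg_left (key2 w hw) (jb_rpow_nonneg _ (-y))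
      _ = (∫ w in (s/2)..s, jb (s - w) ^ (-y)) * (2^|β| * jb s ^ (-β)) :=
          intervalIntegral.integral_mul_const _ _
      _ ≤ (jb s ^ (1-y)/(1-y)) * (2^|β| * jb s ^ (-β)) := by
          apply mul_le_mul_of_nonneg_right ?_
            (mul_nonneg (two_rpow_pos _).le (jb_rpow_nonneg _ _))
          have hsub : (∫ w in (s/2)..s, jb (s - w) ^ (-y)) =
              ∫ u in (0:ℝ)..(s/2), jb u ^ (-y) := by
            rw [intervalIntegral.integral_comp_sub_left (fun u => jb u ^ (-y)) s,
              sub_self, show s - s/2 = s/2 by ring]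
          rw [hsub]
          calc (∫ u in (0:ℝ)..(s/2), jb u ^ (-y)) ≤ jb (s/2) ^ (1-y)/(1-y) := B1 hy hhalf
            _ ≤ jb s ^ (1-y)/(1-y) := by
                apply div_le_div_of_nonneg_right ?_ hy1.le
                apply jb_rpow_le_rpow_base ?_ (by linarith)
                rw [abs_of_nonneg hhalf, abs_of_nonneg hs]; linarith
      _ = 2^|β|/(1-y) * (jb s ^ (1-y) * jb s ^ (-β)) := by ring
      _ = 2^|β|/(1-y) * jb s ^ (1 - y - β) := by
          rw [jb_rpow_mul_rpow, show ((1-y) + -β : ℝ) = 1 - y - β by ring]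
      _ ≤ 2^|β|/(1-y) * jb s ^ (-y) := by
          apply mul_le_mul_of_nonneg_left (jb_rpow_le_rpow_exp (by linarith))
            (div_nonneg (two_rpow_pos _).le hy1.le)
  rw [hsplit]; linarith

lemma jb_half_rpow (s E : ℝ) : jb (s/2) ^ E ≤ 2^|E| * jb s ^ E := by
  have hm : jb (s/2) ≤ jb s := by
    apply jb_mono
    rw [abs_div, abs_of_nonneg (by norm_num : (0:ℝ) ≤ 2)]
    linarith [abs_nonneg s]
  have h := jb_rpow_le_scaled (u := s/2) (d := s) (β := -E) (jb_half s) hm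
  rw [neg_neg, abs_neg] at h
  exact h

lemma jb_double_rpow {w ρ : ℝ} (hρ : 0 ≤ ρ) : jb (2*w) ^ (-ρ) ≤ jb w ^ (-ρ) :=
  jb_rpow_le_rpow_base_neg
    (by rw [abs_mul, abs_of_nonneg (by norm_num : (0:ℝ) ≤ 2)]; nlinarith [abs_nonneg w])
    (neg_nonpos.mpr hρ)

lemma jb_single_to_double (τ β : ℝ) : jb τ ^ (-β) ≤ 2^|β| * jb (2*τ) ^ (-β) := by
  have hm : jb τ ≤ jb (2*τ) := by
    apply jb_mono
    rw [abs_mul, abs_of_nonneg (by norm_num : (0:ℝ) ≤ 2)]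
    linarith [abs_nonneg τ]
  exact jb_rpow_le_scaled (jb_two_mul τ) hm

-- integrability of τ ↦ (s - 2τ)^(-1/2)
lemma intInt_sub_two_sqrt (s a b : ℝ) :
    IntervalIntegrable (fun τ => (s - 2*τ) ^ (-(1/2) : ℝ)) volume a b := by
  have h := (intInt_sub_sqrt s (2*a) (2*b)).comp_mul_left (c := 2)
  simpa [mul_div_cancel_left₀] using h

lemma intInt_jb_mul_sub_two_sqrt (β s a b : ℝ) :
    IntervalIntegrable (fun τ => jb τ ^ (-β) * (s - 2*τ) ^ (-(1/2) : ℝ)) volume a b :=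
  (intInt_sub_two_sqrt s a b).continuousOn_mul (continuous_jb_rpow (-β)).continuousOn

lemma intInt_jb2_mul_sub_two_sqrt (β s a b : ℝ) :
    IntervalIntegrable (fun τ => jb (2*τ) ^ (-β) * (s - 2*τ) ^ (-(1/2) : ℝ)) volume a b := by
  have h := (intInt_jb_mul_sub_sqrt β s (2*a) (2*b)).comp_mul_left (c := 2)
  simpa [mul_div_cancel_left₀] using h

-- C4 : ∫_0^{s/2} ⟨τ⟩^{-β} (s-2τ)^{-1/2} dτ ≤ C ⟨s⟩^{1/2-β}, β < 1
lemma C4 {β : ℝ} (hβ : β < 1) :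
    ∃ C > 0, ∀ s : ℝ, 0 ≤ s →
      (∫ τ in (0:ℝ)..(s/2), jb τ ^ (-β) * (s - 2*τ) ^ (-(1/2) : ℝ)) ≤
        C * jb s ^ ((1:ℝ)/2 - β) := by
  obtain ⟨C0, hC0, hB4⟩ := B4 hβ
  refine ⟨2^|β| * C0, by positivity, ?_⟩
  intro s hs
  have hhalf : (0:ℝ) ≤ s/2 := by linarith
  have hmono : (∫ τ in (0:ℝ)..(s/2), jb τ ^ (-β) * (s - 2*τ) ^ (-(1/2) : ℝ)) ≤
      ∫ τ in (0:ℝ)..(s/2), 2^|β| * (jb (2*τ) ^ (-β) * (s - 2*τ) ^ (-(1/2) : ℝ)) := by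
    apply intervalIntegral.integral_mono_on hhalf (intInt_jb_mul_sub_two_sqrt β s 0 (s/2))
      ((intInt_jb2_mul_sub_two_sqrt β s 0 (s/2)).const_mul _)
    intro τ _
    have h1 := jb_single_to_double τ β
    have h2 : (0:ℝ) ≤ (s - 2*τ) ^ (-(1/2) : ℝ) := sub_sqrt_nonneg s (2*τ)
    calc jb τ ^ (-β) * (s - 2*τ) ^ (-(1/2) : ℝ)
        ≤ (2^|β| * jb (2*τ) ^ (-β)) * (s - 2*τ) ^ (-(1/2) : ℝ) :=
          mul_le_mul_of_nonneg_right h1 h2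
      _ = 2^|β| * (jb (2*τ) ^ (-β) * (s - 2*τ) ^ (-(1/2) : ℝ)) := by ring
  have hsub : (∫ τ in (0:ℝ)..(s/2), jb (2*τ) ^ (-β) * (s - 2*τ) ^ (-(1/2) : ℝ)) =
      (2:ℝ)⁻¹ * ∫ v in (0:ℝ)..s, jb v ^ (-β) * (s - v) ^ (-(1/2) : ℝ) := by
    have h := intervalIntegral.integral_comp_mul_left
      (fun v => jb v ^ (-β) * (s - v) ^ (-(1/2) : ℝ)) (two_ne_zero)
      (a := (0:ℝ)) (b := s/2)
    rw [show (2:ℝ) * (s/2) = s by ring, mul_zero] at h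
    rw [h, smul_eq_mul]
  rw [intervalIntegral.integral_const_mul] at hmono
  rw [hsub] at hmono
  have hB := hB4 s hs
  calc (∫ τ in (0:ℝ)..(s/2), jb τ ^ (-β) * (s - 2*τ) ^ (-(1/2) : ℝ))
      ≤ 2^|β| * ((2:ℝ)⁻¹ * ∫ v in (0:ℝ)..s, jb v ^ (-β) * (s - v) ^ (-(1/2) : ℝ)) := hmono
    _ ≤ 2^|β| * ((2:ℝ)⁻¹ * (C0 * jb s ^ ((1:ℝ)/2 - β))) := by
        apply mul_le_mul_of_nonneg_left ?_ (two_rpow_pos _).le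
        apply mul_le_mul_of_nonneg_left hB (by norm_num)
    _ = 2^|β| * (2:ℝ)⁻¹ * (C0 * jb s ^ ((1:ℝ)/2 - β)) := by ring
    _ ≤ 2^|β| * (C0 * jb s ^ ((1:ℝ)/2 - β)) := by
        apply mul_le_mul_of_nonneg_right ?_ (mul_nonneg hC0.le (jb_rpow_nonneg _ _))
        nlinarith [two_rpow_pos |β|]
    _ = 2^|β| * C0 * jb s ^ ((1:ℝ)/2 - β) := by ring

-- C6 : ∫_0^{s/2} ⟨τ⟩^{-β} ⟨s-2τ⟩^{-e} dτ ≤ C ⟨s⟩^{1-β-e}, β,e < 1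
lemma C6 {β e : ℝ} (hβ : β < 1) (he : e < 1) :
    ∃ C > 0, ∀ s : ℝ, 0 ≤ s →
      (∫ τ in (0:ℝ)..(s/2), jb τ ^ (-β) * jb (s - 2*τ) ^ (-e)) ≤
        C * jb s ^ (1 - β - e) := by
  obtain ⟨C0, hC0, hB6⟩ := B6 hβ he
  refine ⟨2^|β| * C0, by positivity, ?_⟩
  intro s hs
  have hhalf : (0:ℝ) ≤ s/2 := by linarith
  have hcont : ∀ c : ℝ, Continuous (fun τ : ℝ => jb (c*τ) ^ (-β) * jb (s - 2*τ) ^ (-e)) := by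
    intro c
    exact ((continuous_jb_rpow (-β)).comp (continuous_const.mul continuous_id)).mul
      ((continuous_jb_rpow (-e)).comp (continuous_const.sub
        (continuous_const.mul continuous_id)))
  have hmono : (∫ τ in (0:ℝ)..(s/2), jb τ ^ (-β) * jb (s - 2*τ) ^ (-e)) ≤
      ∫ τ in (0:ℝ)..(s/2), 2^|β| * (jb (2*τ) ^ (-β) * jb (s - 2*τ) ^ (-e)) := by
    apply intervalIntegral.integral_mono_on hhalf
      (Continuous.intervalIntegrable (by
        simpa using hcont 1) _ _)
      (Continuous.intervalIntegrable (continuous_const.mul (hcont 2)) _ _)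
    intro τ _
    have h1 := jb_single_to_double τ β
    have h2 : (0:ℝ) ≤ jb (s - 2*τ) ^ (-e) := jb_rpow_nonneg _ _
    calc jb τ ^ (-β) * jb (s - 2*τ) ^ (-e)
        ≤ (2^|β| * jb (2*τ) ^ (-β)) * jb (s - 2*τ) ^ (-e) :=
          mul_le_mul_of_nonneg_right h1 h2
      _ = 2^|β| * (jb (2*τ) ^ (-β) * jb (s - 2*τ) ^ (-e)) := by ring
  have hsub : (∫ τ in (0:ℝ)..(s/2), jb (2*τ) ^ (-β) * jb (s - 2*τ) ^ (-e)) =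
      (2:ℝ)⁻¹ * ∫ v in (0:ℝ)..s, jb v ^ (-β) * jb (s - v) ^ (-e) := by
    have h := intervalIntegral.integral_comp_mul_left
      (fun v => jb v ^ (-β) * jb (s - v) ^ (-e)) (two_ne_zero)
      (a := (0:ℝ)) (b := s/2)
    rw [show (2:ℝ) * (s/2) = s by ring, mul_zero] at h
    rw [h, smul_eq_mul]
  rw [intervalIntegral.integral_const_mul, hsub] at hmono
  have hB := hB6 s hs
  calc (∫ τ in (0:ℝ)..(s/2), jb τ ^ (-β) * jb (s - 2*τ) ^ (-e))
      ≤ 2^|β| * ((2:ℝ)⁻¹ * ∫ v in (0:ℝ)..s, jb v ^ (-β) * jb (s - v) ^ (-e)) := hmono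
    _ ≤ 2^|β| * ((2:ℝ)⁻¹ * (C0 * jb s ^ (1 - β - e))) := by
        apply mul_le_mul_of_nonneg_left ?_ (two_rpow_pos _).le
        apply mul_le_mul_of_nonneg_left hB (by norm_num)
    _ = 2^|β| * (2:ℝ)⁻¹ * (C0 * jb s ^ (1 - β - e)) := by ring
    _ ≤ 2^|β| * (C0 * jb s ^ (1 - β - e)) := by
        apply mul_le_mul_of_nonneg_right ?_ (mul_nonneg hC0.le (jb_rpow_nonneg _ _))
        nlinarith [two_rpow_pos |β|]
    _ = 2^|β| * C0 * jb s ^ (1 - β - e) := by ring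

-- D3a : ∫_0^{s/2} ⟨s/2-w⟩^{-y} ⟨2w⟩^{-ρ} dw ≤ C ⟨s⟩^{1-y-ρ}  (y < 1, 0 ≤ ρ < 1)
lemma D3a {y ρ : ℝ} (hy : y < 1) (hρ0 : 0 ≤ ρ) (hρ : ρ < 1) :
    ∃ C > 0, ∀ s : ℝ, 0 ≤ s →
      (∫ w in (0:ℝ)..(s/2), jb (s/2 - w) ^ (-y) * jb (2*w) ^ (-ρ)) ≤
        C * jb s ^ (1 - y - ρ) := by
  obtain ⟨C0, hC0, hB6⟩ := B6 hρ hy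
  refine ⟨C0 * 2^|1 - ρ - y|, by positivity, ?_⟩
  intro s hs
  have hhalf : (0:ℝ) ≤ s/2 := by linarith
  have hmono : (∫ w in (0:ℝ)..(s/2), jb (s/2 - w) ^ (-y) * jb (2*w) ^ (-ρ)) ≤
      ∫ w in (0:ℝ)..(s/2), jb w ^ (-ρ) * jb (s/2 - w) ^ (-y) := by
    apply intervalIntegral.integral_mono_on hhalf
      (Continuous.intervalIntegrable (by
        exact ((continuous_jb_rpow (-y)).comp (continuous_const.sub continuous_id)).mul
          ((continuous_jb_rpow (-ρ)).comp (continuous_const.mul continuous_id))) _ _)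
      (intInt_jb_jb ρ y (s/2) 0 (s/2))
    intro w _
    have h1 : jb (2*w) ^ (-ρ) ≤ jb w ^ (-ρ) := jb_double_rpow hρ0
    have h2 : (0:ℝ) ≤ jb (s/2 - w) ^ (-y) := jb_rpow_nonneg _ _
    calc jb (s/2 - w) ^ (-y) * jb (2*w) ^ (-ρ)
        ≤ jb (s/2 - w) ^ (-y) * jb w ^ (-ρ) := mul_le_mul_of_nonneg_left h1 h2
      _ = jb w ^ (-ρ) * jb (s/2 - w) ^ (-y) := by ring
  have hB := hB6 (s/2) hhalf
  have hhr := jb_half_rpow s (1 - ρ - y)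
  calc (∫ w in (0:ℝ)..(s/2), jb (s/2 - w) ^ (-y) * jb (2*w) ^ (-ρ))
      ≤ C0 * jb (s/2) ^ (1 - ρ - y) := hmono.trans hB
    _ ≤ C0 * (2^|1 - ρ - y| * jb s ^ (1 - ρ - y)) := mul_le_mul_of_nonneg_left hhr hC0.le
    _ = C0 * 2^|1 - ρ - y| * jb s ^ (1 - y - ρ) := by
        rw [show (1 - ρ - y : ℝ) = 1 - y - ρ by ring]; ring

-- D3b : ∫_0^{s/2} ⟨s/2-w⟩^{-y} ⟨2w⟩^{-ρ} dw ≤ C ⟨s⟩^{-y}  (y < 1, ρ > 1)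
lemma D3b {y ρ : ℝ} (hy : y < 1) (hρ : 1 < ρ) :
    ∃ C > 0, ∀ s : ℝ, 0 ≤ s →
      (∫ w in (0:ℝ)..(s/2), jb (s/2 - w) ^ (-y) * jb (2*w) ^ (-ρ)) ≤
        C * jb s ^ (-y) := by
  obtain ⟨C0, hC0, hB7⟩ := B7 hy hρ
  refine ⟨C0 * 2^|y|, by positivity, ?_⟩
  intro s hs
  have hhalf : (0:ℝ) ≤ s/2 := by linarith
  have hmono : (∫ w in (0:ℝ)..(s/2), jb (s/2 - w) ^ (-y) * jb (2*w) ^ (-ρ)) ≤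
      ∫ w in (0:ℝ)..(s/2), jb (s/2 - w) ^ (-y) * jb w ^ (-ρ) := by
    apply intervalIntegral.integral_mono_on hhalf
      (Continuous.intervalIntegrable (by
        exact ((continuous_jb_rpow (-y)).comp (continuous_const.sub continuous_id)).mul
          ((continuous_jb_rpow (-ρ)).comp (continuous_const.mul continuous_id))) _ _)
      (Continuous.intervalIntegrable (by
        exact ((continuous_jb_rpow (-y)).comp (continuous_const.sub continuous_id)).mul
          (continuous_jb_rpow (-ρ))) _ _)
    intro w _
    exact mul_le_mul_of_nonneg_left (jb_double_rpow (by linarith)) (jb_rpow_nonneg _ _)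
  have hB := hB7 (s/2) hhalf
  have hhr := jb_half_rpow s (-y)
  calc (∫ w in (0:ℝ)..(s/2), jb (s/2 - w) ^ (-y) * jb (2*w) ^ (-ρ))
      ≤ C0 * jb (s/2) ^ (-y) := hmono.trans hB
    _ ≤ C0 * (2^|(-y)| * jb s ^ (-y)) := mul_le_mul_of_nonneg_left hhr hC0.le
    _ = C0 * 2^|y| * jb s ^ (-y) := by rw [abs_neg]; ring

lemma phi_pos (κ t r : ℝ) : 0 < phi κ t r :=
  mul_pos (jb_rpow_pos _ _) (jb_rpow_pos _ _)

lemma continuous_phi (κ τ : ℝ) : Continuous (fun l => phi κ τ l) :=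
  ((continuous_jb_rpow _).comp (continuous_const.add continuous_id)).mul
    ((continuous_jb_rpow _).comp (continuous_const.sub continuous_id))

lemma continuous_phi_pow (κ τ p : ℝ) : Continuous (fun l => phi κ τ l ^ p) :=
  (continuous_phi κ τ).rpow_const (fun x => Or.inl (phi_pos κ τ x).ne')

lemma phi_pow (κ τ l p : ℝ) :
    phi κ τ l ^ p = jb (τ + l) ^ (-(p/2)) * jb (τ - l) ^ (-(κ*p)) := by
  rw [phi, Real.mul_rpow (jb_rpow_nonneg _ _) (jb_rpow_nonneg _ _),
    ← Real.rpow_mul (jb_nonneg _), ← Real.rpow_mul (jb_nonneg _),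
    show (-(1/2:ℝ))*p = -(p/2) by ring, show (-κ)*p = -(κ*p) by ring]

lemma phi_pow_nonneg (κ τ l p : ℝ) : 0 ≤ phi κ τ l ^ p :=
  Real.rpow_nonneg (phi_pos κ τ l).le _

lemma innerInt (p κ τ T : ℝ) (a b : ℝ) :
    IntervalIntegrable (fun l => jb l ^ (p/2) * phi κ τ l ^ p * (T - l) ^ (-(1/2):ℝ))
      volume a b :=
  (intInt_sub_sqrt T a b).continuousOn_mul
    ((continuous_jb_rpow (p/2)).mul (continuous_phi_pow κ τ p)).continuousOn

lemma inner_nonneg (p κ τ T l : ℝ) :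
    0 ≤ jb l ^ (p/2) * phi κ τ l ^ p * (T - l) ^ (-(1/2):ℝ) :=
  mul_nonneg (mul_nonneg (jb_rpow_nonneg _ _) (phi_pow_nonneg κ τ l p))
    (sub_sqrt_nonneg T l)

-- Region I inner estimate
lemma IR1 {p κ ρ : ℝ} (hp : 0 ≤ p) (hρκ : ρ ≤ κ*p) {τ T : ℝ}
    (hτ : 0 ≤ τ) (hτT : τ ≤ T) :
    (∫ l in τ..T, jb l ^ (p/2) * phi κ τ l ^ p * (T - l) ^ (-(1/2):ℝ)) ≤
      ∫ u in (0:ℝ)..(T - τ), jb u ^ (-ρ) * ((T - τ) - u) ^ (-(1/2):ℝ) := by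
  have hsub : (∫ l in τ..T, jb (l - τ) ^ (-ρ) * (T - l) ^ (-(1/2):ℝ)) =
      ∫ u in (0:ℝ)..(T - τ), jb u ^ (-ρ) * ((T - τ) - u) ^ (-(1/2):ℝ) := by
    have h := intervalIntegral.integral_comp_sub_right
      (fun u => jb u ^ (-ρ) * ((T - τ) - u) ^ (-(1/2):ℝ)) τ (a := τ) (b := T)
    rw [sub_self] at h
    have heq : Set.EqOn
        (fun x => jb (x - τ) ^ (-ρ) * ((T - τ) - (x - τ)) ^ (-(1/2):ℝ))
        (fun x => jb (x - τ) ^ (-ρ) * (T - x) ^ (-(1/2):ℝ)) (Set.uIcc τ T) := by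
      intro x _
      simp only
      rw [show (T - τ) - (x - τ) = T - x by ring]
    rw [intervalIntegral.integral_congr heq] at h
    exact h
  rw [← hsub]
  apply intervalIntegral.integral_mono_on hτT (innerInt p κ τ T τ T)
    ((intInt_sub_sqrt T τ T).continuousOn_mul
      ((continuous_jb_rpow (-ρ)).comp (continuous_id.sub continuous_const)).continuousOn)
  intro l hl
  rw [phi_pow]
  have hl0 : 0 ≤ l := le_trans hτ hl.1
  have hA : jb l ^ (p/2) * jb (τ + l) ^ (-(p/2)) ≤ 1 := by
    have h1 : jb l ^ (p/2) ≤ jb (τ + l) ^ (p/2) := by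
      apply jb_rpow_le_rpow_base ?_ (by linarith : (0:ℝ) ≤ p/2)
      rw [abs_of_nonneg hl0, abs_of_nonneg (by linarith : (0:ℝ) ≤ τ + l)]
      linarith
    calc jb l ^ (p/2) * jb (τ + l) ^ (-(p/2))
        ≤ jb (τ + l) ^ (p/2) * jb (τ + l) ^ (-(p/2)) :=
          mul_le_mul_of_nonneg_right h1 (jb_rpow_nonneg _ _)
      _ = 1 := by rw [jb_rpow_mul_rpow, show p/2 + -(p/2) = 0 by ring, Real.rpow_zero]
  have hBB : jb (τ - l) ^ (-(κ*p)) ≤ jb (l - τ) ^ (-ρ) := by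
    rw [jb_comm]
    exact jb_rpow_le_rpow_exp (by linarith)
  have key : jb l ^ (p/2) * (jb (τ + l) ^ (-(p/2)) * jb (τ - l) ^ (-(κ*p))) ≤
      jb (l - τ) ^ (-ρ) := by
    calc jb l ^ (p/2) * (jb (τ + l) ^ (-(p/2)) * jb (τ - l) ^ (-(κ*p)))
        = (jb l ^ (p/2) * jb (τ + l) ^ (-(p/2))) * jb (τ - l) ^ (-(κ*p)) := by ring
      _ ≤ 1 * jb (l - τ) ^ (-ρ) :=
          mul_le_mul hA hBB (jb_rpow_nonneg _ _) (by norm_num)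
      _ = jb (l - τ) ^ (-ρ) := one_mul _
  exact mul_le_mul_of_nonneg_right key (sub_sqrt_nonneg T l)

-- Region II inner estimate
lemma IR2 {p κ ρ s τ : ℝ} (hp : 0 ≤ p) (hρκ : ρ ≤ κ*p) (hτ0 : 0 ≤ τ) (hτs : τ < s/2) :
    (∫ l in (0:ℝ)..τ, jb l ^ (p/2) * phi κ τ l ^ p * ((s - τ) - l) ^ (-(1/2):ℝ)) ≤
      (jb τ ^ (-(p/2)) * (s - 2*τ) ^ (-(1/2):ℝ)) *
        ∫ l in (0:ℝ)..τ, jb l ^ (p/2) * jb (τ - l) ^ (-ρ) := by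
  have hcont : Continuous (fun l => jb l ^ (p/2) * jb (τ - l) ^ (-ρ)) :=
    (continuous_jb_rpow (p/2)).mul
      ((continuous_jb_rpow (-ρ)).comp (continuous_const.sub continuous_id))
  rw [← intervalIntegral.integral_const_mul]
  apply intervalIntegral.integral_mono_on hτ0 (innerInt p κ τ (s - τ) 0 τ)
    (Continuous.intervalIntegrable (continuous_const.mul hcont) _ _)
  intro l hl
  rw [phi_pow]
  have hs2τ : (0:ℝ) < s - 2*τ := by linarith
  have h1 : jb (τ + l) ^ (-(p/2)) ≤ jb τ ^ (-(p/2)) := by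
    apply jb_rpow_le_rpow_base_neg ?_ (by linarith : -(p/2) ≤ 0)
    rw [abs_of_nonneg hτ0, abs_of_nonneg (by linarith [hl.1] : (0:ℝ) ≤ τ + l)]
    linarith [hl.1]
  have h2 : jb (τ - l) ^ (-(κ*p)) ≤ jb (τ - l) ^ (-ρ) :=
    jb_rpow_le_rpow_exp (by linarith)
  have h3 : ((s - τ) - l) ^ (-(1/2):ℝ) ≤ (s - 2*τ) ^ (-(1/2):ℝ) := by
    apply Real.rpow_le_rpow_of_nonpos hs2τ ?_ (by norm_num)
    linarith [hl.2]
  calc jb l ^ (p/2) * (jb (τ + l) ^ (-(p/2)) * jb (τ - l) ^ (-(κ*p))) *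
        ((s - τ) - l) ^ (-(1/2):ℝ)
      = (jb (τ + l) ^ (-(p/2)) * ((s - τ) - l) ^ (-(1/2):ℝ)) *
          (jb l ^ (p/2) * jb (τ - l) ^ (-(κ*p))) := by ring
    _ ≤ (jb τ ^ (-(p/2)) * (s - 2*τ) ^ (-(1/2):ℝ)) *
          (jb l ^ (p/2) * jb (τ - l) ^ (-ρ)) := by
        apply mul_le_mul
        · exact mul_le_mul h1 h3 (sub_sqrt_nonneg _ _) (jb_rpow_nonneg _ _)
        · exact mul_le_mul_of_nonneg_left h2 (jb_rpow_nonneg _ _)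
        · exact mul_nonneg (jb_rpow_nonneg _ _) (jb_rpow_nonneg _ _)
        · exact mul_nonneg (jb_rpow_nonneg _ _) (Real.rpow_nonneg hs2τ.le _)

-- Region III inner estimate
lemma IR3 {p κ ρ s τ : ℝ} (hp : 0 ≤ p) (hκp0 : 0 ≤ κ*p) (hρκ : ρ ≤ κ*p) (hs2τ : s/2 ≤ τ) (hτs : τ ≤ s) :
    (∫ l in (0:ℝ)..(s - τ), jb l ^ (p/2) * phi κ τ l ^ p * ((s - τ) - l) ^ (-(1/2):ℝ)) ≤
      2^|p/2| * jb s ^ (-(p/2)) * jb (2*τ - s) ^ (-ρ) * 2 * jb (s - τ) ^ ((p+1)/2) := by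
  have hT0 : (0:ℝ) ≤ s - τ := by linarith
  have hs0 : (0:ℝ) ≤ s := by linarith
  have hτ0 : (0:ℝ) ≤ τ := by linarith
  have hconst : 0 ≤ jb (s - τ) ^ (p/2) * (2^|p/2| * jb s ^ (-(p/2)) * jb (2*τ - s) ^ (-ρ)) :=
    mul_nonneg (jb_rpow_nonneg _ _) (mul_nonneg
      (mul_nonneg (two_rpow_pos _).le (jb_rpow_nonneg _ _)) (jb_rpow_nonneg _ _))
  have hmono : (∫ l in (0:ℝ)..(s - τ),
        jb l ^ (p/2) * phi κ τ l ^ p * ((s - τ) - l) ^ (-(1/2):ℝ)) ≤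
      ∫ l in (0:ℝ)..(s - τ),
        (jb (s - τ) ^ (p/2) * (2^|p/2| * jb s ^ (-(p/2)) * jb (2*τ - s) ^ (-ρ))) *
          ((s - τ) - l) ^ (-(1/2):ℝ) := by
    apply intervalIntegral.integral_mono_on hT0 (innerInt p κ τ (s - τ) 0 (s - τ))
      ((intInt_sub_sqrt (s - τ) 0 (s - τ)).const_mul _)
    intro l hl
    rw [phi_pow]
    have h1 : jb l ^ (p/2) ≤ jb (s - τ) ^ (p/2) := by
      apply jb_rpow_le_rpow_base ?_ (by linarith : (0:ℝ) ≤ p/2)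
      rw [abs_of_nonneg hl.1, abs_of_nonneg hT0]
      exact hl.2
    have h2 : jb (τ + l) ^ (-(p/2)) ≤ 2^|p/2| * jb s ^ (-(p/2)) := by
      apply jb_rpow_le_scaled
      · simp only [jb]
        rw [abs_of_nonneg hs0, abs_of_nonneg (by linarith [hl.1] : (0:ℝ) ≤ τ + l)]
        linarith [hl.1]
      · apply jb_mono
        rw [abs_of_nonneg hs0, abs_of_nonneg (by linarith [hl.1] : (0:ℝ) ≤ τ + l)]
        linarith [hl.2]
    have h3 : jb (τ - l) ^ (-(κ*p)) ≤ jb (2*τ - s) ^ (-ρ) := by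
      have h3a : jb (τ - l) ^ (-(κ*p)) ≤ jb (2*τ - s) ^ (-(κ*p)) := by
        apply jb_rpow_le_rpow_base_neg ?_ (by linarith : -(κ*p) ≤ 0)
        rw [abs_of_nonneg (by linarith : (0:ℝ) ≤ 2*τ - s),
          abs_of_nonneg (by linarith [hl.2] : (0:ℝ) ≤ τ - l)]
        linarith [hl.2]
      exact h3a.trans (jb_rpow_le_rpow_exp (by linarith))
    have key : jb l ^ (p/2) * (jb (τ + l) ^ (-(p/2)) * jb (τ - l) ^ (-(κ*p))) ≤
        jb (s - τ) ^ (p/2) * (2^|p/2| * jb s ^ (-(p/2)) * jb (2*τ - s) ^ (-ρ)) := by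
      apply mul_le_mul h1 ?_ ?_ (jb_rpow_nonneg _ _)
      · calc jb (τ + l) ^ (-(p/2)) * jb (τ - l) ^ (-(κ*p))
            ≤ (2^|p/2| * jb s ^ (-(p/2))) * jb (2*τ - s) ^ (-ρ) :=
              mul_le_mul h2 h3 (jb_rpow_nonneg _ _)
                (mul_nonneg (two_rpow_pos _).le (jb_rpow_nonneg _ _))
          _ = 2^|p/2| * jb s ^ (-(p/2)) * jb (2*τ - s) ^ (-ρ) := by ring
      · exact mul_nonneg (jb_rpow_nonneg _ _) (jb_rpow_nonneg _ _)
    exact mul_le_mul_of_nonneg_right key (sub_sqrt_nonneg _ _)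
  have hint : (∫ l in (0:ℝ)..(s - τ),
      (jb (s - τ) ^ (p/2) * (2^|p/2| * jb s ^ (-(p/2)) * jb (2*τ - s) ^ (-ρ))) *
        ((s - τ) - l) ^ (-(1/2):ℝ)) =
      (jb (s - τ) ^ (p/2) * (2^|p/2| * jb s ^ (-(p/2)) * jb (2*τ - s) ^ (-ρ))) *
        (2 * (s - τ) ^ ((1/2):ℝ)) := by
    rw [intervalIntegral.integral_const_mul, B3 hT0, sub_zero]
  have hfin : (jb (s - τ) ^ (p/2) * (2^|p/2| * jb s ^ (-(p/2)) * jb (2*τ - s) ^ (-ρ))) *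
      (2 * (s - τ) ^ ((1/2):ℝ)) ≤
      2^|p/2| * jb s ^ (-(p/2)) * jb (2*τ - s) ^ (-ρ) * 2 * jb (s - τ) ^ ((p+1)/2) := by
    have h4 : (s - τ) ^ ((1/2):ℝ) ≤ jb (s - τ) ^ ((1/2):ℝ) := by
      apply Real.rpow_le_rpow hT0 ?_ (by norm_num)
      simp only [jb]; rw [abs_of_nonneg hT0]; linarith
    have h5 : jb (s - τ) ^ (p/2) * jb (s - τ) ^ ((1/2):ℝ) = jb (s - τ) ^ ((p+1)/2) := by
      rw [jb_rpow_mul_rpow, show (p/2 + (1:ℝ)/2 : ℝ) = (p+1)/2 by ring]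
    calc (jb (s - τ) ^ (p/2) * (2^|p/2| * jb s ^ (-(p/2)) * jb (2*τ - s) ^ (-ρ))) *
          (2 * (s - τ) ^ ((1/2):ℝ))
        ≤ (jb (s - τ) ^ (p/2) * (2^|p/2| * jb s ^ (-(p/2)) * jb (2*τ - s) ^ (-ρ))) *
          (2 * jb (s - τ) ^ ((1/2):ℝ)) := by
          apply mul_le_mul_of_nonneg_left ?_ hconst
          linarith
      _ = (2^|p/2| * jb s ^ (-(p/2)) * jb (2*τ - s) ^ (-ρ)) * 2 *
            (jb (s - τ) ^ (p/2) * jb (s - τ) ^ ((1/2):ℝ)) := by ring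
      _ = 2^|p/2| * jb s ^ (-(p/2)) * jb (2*τ - s) ^ (-ρ) * 2 * jb (s - τ) ^ ((p+1)/2) := by
          rw [h5]
  exact hmono.trans (le_of_eq hint) |>.trans hfin

set_option maxHeartbeats 2000000 in
lemma master {p κ a b ρ e₁ m₂ E C₁ C₂ C₃ : ℝ}
    (hp : 0 ≤ p) (hκp0 : 0 ≤ κ*p) (hρ0 : 0 ≤ ρ) (hρκ : ρ ≤ κ*p)
    (ha0 : 0 ≤ a) (ha1 : a < 1) (hb0 : 0 ≤ b)
    (he₁ : e₁ < 1) (hm₂ : a - m₂ + p/2 < 1)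
    (hC₁ : 0 ≤ C₁) (hC₂ : 0 ≤ C₂) (hC₃ : 0 ≤ C₃)
    (h1 : ∀ d : ℝ, 0 ≤ d →
      (∫ u in (0:ℝ)..d, jb u ^ (-ρ) * (d - u) ^ (-(1/2):ℝ)) ≤ C₁ * jb d ^ (-e₁))
    (h2 : ∀ τ : ℝ, 0 ≤ τ →
      (∫ l in (0:ℝ)..τ, jb l ^ (p/2) * jb (τ - l) ^ (-ρ)) ≤ C₂ * jb τ ^ m₂)
    (h3 : ∀ s : ℝ, 0 ≤ s →
      (∫ w in (0:ℝ)..(s/2), jb (s/2 - w) ^ (-(b - (p+1)/2)) * jb (2*w) ^ (-ρ)) ≤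
        C₃ * jb s ^ (E + a + p/2))
    (hE1 : 1 - a - e₁ - b = E) (hE2 : 1/2 - (a - m₂ + p/2) - b = E) :
    ∃ C > 0, ∀ s : ℝ, 0 < s →
      (∫ τ in (0:ℝ)..s, jb τ ^ (-a) * jb (s - τ) ^ (-b) *
        ∫ l in (0:ℝ)..(s - τ), jb l ^ (p/2) * phi κ τ l ^ p * ((s - τ) - l) ^ (-(1/2):ℝ))
      ≤ C * jb s ^ E := by
  obtain ⟨Ca, hCa, hCa'⟩ := C6 ha1 he₁
  obtain ⟨Cb, hCb, hCb'⟩ := C4 hm₂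
  refine ⟨2^|b| * C₁ * Ca + 2^|b| * C₂ * Cb + 2^|a| * 2^|p/2| * 2 * C₃ + 1, by positivity, ?_⟩
  intro s hs
  have hs0 : (0:ℝ) ≤ s := hs.le
  have hhalf : (0:ℝ) ≤ s/2 := by linarith
  have hsh : s/2 ≤ s := by linarith
  set c₁ : ℝ := 2^|b| * jb s ^ (-b) * C₁ with hc₁
  set c₂ : ℝ := 2^|b| * jb s ^ (-b) * C₂ with hc₂
  set c₃ : ℝ := 2^|a| * 2^|p/2| * 2 * jb s ^ (-(a + p/2)) with hc₃
  have hc₁0 : 0 ≤ c₁ := by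
    rw [hc₁]; exact mul_nonneg (mul_nonneg (two_rpow_pos _).le (jb_rpow_nonneg _ _)) hC₁
  have hc₂0 : 0 ≤ c₂ := by
    rw [hc₂]; exact mul_nonneg (mul_nonneg (two_rpow_pos _).le (jb_rpow_nonneg _ _)) hC₂
  have hc₃0 : 0 ≤ c₃ := by
    rw [hc₃]
    exact mul_nonneg (by positivity) (jb_rpow_nonneg _ _)
  set H₁ : ℝ → ℝ := fun τ => c₁ * (jb τ ^ (-a) * jb (s - 2*τ) ^ (-e₁)) with hH₁
  set H₂ : ℝ → ℝ := fun τ => c₂ * (jb τ ^ (-(a - m₂ + p/2)) * (s - 2*τ) ^ (-(1/2):ℝ)) with hH₂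
  set H₃ : ℝ → ℝ := fun τ => c₃ * (jb (s - τ) ^ ((p+1)/2 - b) * jb (2*τ - s) ^ (-ρ)) with hH₃
  set H : ℝ → ℝ := fun τ => if τ ≤ s/2 then H₁ τ + H₂ τ else H₃ τ with hHdef
  -- integrability
  have hInt₁ : IntervalIntegrable H₁ volume 0 (s/2) := by
    apply Continuous.intervalIntegrable
    exact continuous_const.mul ((continuous_jb_rpow (-a)).mul
      ((continuous_jb_rpow (-e₁)).comp
        (continuous_const.sub (continuous_const.mul continuous_id))))
  have hInt₂ : IntervalIntegrable H₂ volume 0 (s/2) :=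
    (intInt_jb_mul_sub_two_sqrt (a - m₂ + p/2) s 0 (s/2)).const_mul _
  have hInt₃ : IntervalIntegrable H₃ volume (s/2) s := by
    apply Continuous.intervalIntegrable
    exact continuous_const.mul
      (((continuous_jb_rpow ((p+1)/2 - b)).comp (continuous_const.sub continuous_id)).mul
        ((continuous_jb_rpow (-ρ)).comp
          ((continuous_const.mul continuous_id).sub continuous_const)))
  have hIntL : IntegrableOn H (Set.Ioc 0 (s/2)) volume := by
    apply ((hInt₁.add hInt₂).1).congr_fun ?_ measurableSet_Ioc
    intro τ hτ
    simp only [hHdef, Pi.add_apply, if_pos hτ.2]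
  have hIntR : IntegrableOn H (Set.Ioc (s/2) s) volume := by
    apply (hInt₃.1).congr_fun ?_ measurableSet_Ioc
    intro τ hτ
    simp only [hHdef, if_neg (not_le.mpr hτ.1)]
  have hIntH : IntegrableOn H (Set.Ioc 0 s) volume := by
    rw [← Set.Ioc_union_Ioc_eq_Ioc hhalf hsh]
    exact hIntL.union hIntR
  -- Step B : pointwise/ae comparison
  have hmainmono : (∫ τ in (0:ℝ)..s, jb τ ^ (-a) * jb (s - τ) ^ (-b) *
        ∫ l in (0:ℝ)..(s - τ), jb l ^ (p/2) * phi κ τ l ^ p * ((s - τ) - l) ^ (-(1/2):ℝ)) ≤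
      ∫ τ in Set.Ioc 0 s, H τ := by
    rw [intervalIntegral.integral_of_le hs0]
    apply MeasureTheory.integral_mono_of_nonneg ?_ hIntH ?_
    · apply (ae_restrict_iff' measurableSet_Ioc).2
      apply Filter.Eventually.of_forall
      intro τ hτ
      apply mul_nonneg (mul_nonneg (jb_rpow_nonneg _ _) (jb_rpow_nonneg _ _))
      apply intervalIntegral.integral_nonneg (by linarith [hτ.2] : (0:ℝ) ≤ s - τ)
      intro l _
      exact inner_nonneg p κ τ (s - τ) l
    · have h0 : ∀ᵐ τ : ℝ, τ ∉ ({s/2} : Set ℝ) :=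
        MeasureTheory.compl_mem_ae_iff.mpr Real.volume_singleton
      have hmem : ∀ᵐ τ ∂(volume.restrict (Set.Ioc 0 s)), τ ∈ Set.Ioc 0 s :=
        MeasureTheory.ae_restrict_mem measurableSet_Ioc
      filter_upwards [hmem, MeasureTheory.ae_restrict_of_ae h0] with τ hτ hτne
      have hτ0 : (0:ℝ) < τ := hτ.1
      have hτs : τ ≤ s := hτ.2
      by_cases hcase : τ ≤ s/2
      · -- regions I and II
        have hτlt : τ < s/2 := lt_of_le_of_ne hcase (by simpa using hτne)
        have hτT : τ ≤ s - τ := by linarith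
        have hsplitI : (∫ l in (0:ℝ)..(s - τ),
              jb l ^ (p/2) * phi κ τ l ^ p * ((s - τ) - l) ^ (-(1/2):ℝ)) =
            (∫ l in (0:ℝ)..τ,
              jb l ^ (p/2) * phi κ τ l ^ p * ((s - τ) - l) ^ (-(1/2):ℝ)) +
            (∫ l in τ..(s - τ),
              jb l ^ (p/2) * phi κ τ l ^ p * ((s - τ) - l) ^ (-(1/2):ℝ)) :=
          (intervalIntegral.integral_add_adjacent_intervals
            (innerInt p κ τ (s - τ) 0 τ) (innerInt p κ τ (s - τ) τ (s - τ))).symm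
        have hIR1 := IR1 (κ := κ) (ρ := ρ) hp hρκ hτ0.le hτT
        rw [show s - τ - τ = s - 2*τ by ring] at hIR1
        have hX1 : (∫ l in τ..(s - τ),
            jb l ^ (p/2) * phi κ τ l ^ p * ((s - τ) - l) ^ (-(1/2):ℝ)) ≤
            C₁ * jb (s - 2*τ) ^ (-e₁) :=
          hIR1.trans (h1 (s - 2*τ) (by linarith))
        have hpre0 : 0 ≤ jb τ ^ (-(p/2)) * (s - 2*τ) ^ (-(1/2):ℝ) :=
          mul_nonneg (jb_rpow_nonneg _ _) (Real.rpow_nonneg (by linarith) _)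
        have hX2 : (∫ l in (0:ℝ)..τ,
            jb l ^ (p/2) * phi κ τ l ^ p * ((s - τ) - l) ^ (-(1/2):ℝ)) ≤
            (jb τ ^ (-(p/2)) * (s - 2*τ) ^ (-(1/2):ℝ)) * (C₂ * jb τ ^ m₂) :=
          (IR2 hp hρκ hτ0.le hτlt).trans
            (mul_le_mul_of_nonneg_left (h2 τ hτ0.le) hpre0)
        have hWb : jb (s - τ) ^ (-b) ≤ 2^|b| * jb s ^ (-b) := by
          apply jb_rpow_le_scaled
          · simp only [jb]
            rw [abs_of_nonneg hs0, abs_of_nonneg (by linarith : (0:ℝ) ≤ s - τ)]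
            linarith
          · apply jb_mono
            rw [abs_of_nonneg hs0, abs_of_nonneg (by linarith : (0:ℝ) ≤ s - τ)]
            linarith
        have hInonneg : 0 ≤ (∫ l in (0:ℝ)..(s - τ),
            jb l ^ (p/2) * phi κ τ l ^ p * ((s - τ) - l) ^ (-(1/2):ℝ)) := by
          apply intervalIntegral.integral_nonneg (by linarith : (0:ℝ) ≤ s - τ)
          intro l _
          exact inner_nonneg p κ τ (s - τ) l
        have hstep : jb τ ^ (-a) * jb (s - τ) ^ (-b) *
            (∫ l in (0:ℝ)..(s - τ),
              jb l ^ (p/2) * phi κ τ l ^ p * ((s - τ) - l) ^ (-(1/2):ℝ)) ≤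
            (jb τ ^ (-a) * (2^|b| * jb s ^ (-b))) *
              ((jb τ ^ (-(p/2)) * (s - 2*τ) ^ (-(1/2):ℝ)) * (C₂ * jb τ ^ m₂) +
                C₁ * jb (s - 2*τ) ^ (-e₁)) := by
          apply mul_le_mul
          · exact mul_le_mul_of_nonneg_left hWb (jb_rpow_nonneg _ _)
          · rw [hsplitI]
            exact add_le_add hX2 hX1
          · exact hInonneg
          · exact mul_nonneg (jb_rpow_nonneg _ _)
              (mul_nonneg (two_rpow_pos _).le (jb_rpow_nonneg _ _))
        have hfin : (jb τ ^ (-a) * (2^|b| * jb s ^ (-b))) *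
            ((jb τ ^ (-(p/2)) * (s - 2*τ) ^ (-(1/2):ℝ)) * (C₂ * jb τ ^ m₂) +
              C₁ * jb (s - 2*τ) ^ (-e₁)) = H τ := by
          have hjbτ : jb τ ^ (-a) * jb τ ^ (-(p/2)) * jb τ ^ m₂ =
              jb τ ^ (-(a - m₂ + p/2)) := by
            rw [jb_rpow_mul_rpow, jb_rpow_mul_rpow,
              show (-a + -(p/2) + m₂ : ℝ) = -(a - m₂ + p/2) by ring]
          simp only [hHdef, if_pos hcase, hH₁, hH₂, hc₁, hc₂]
          rw [← hjbτ]; ring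
        rw [← hfin]
        exact hstep
      · -- region III
        have hτgt : s/2 ≤ τ := (not_le.mp hcase).le
        have hIR3 := IR3 (κ := κ) (ρ := ρ) hp hκp0 hρκ hτgt hτs
        have hWa : jb τ ^ (-a) ≤ 2^|a| * jb s ^ (-a) := by
          apply jb_rpow_le_scaled
          · simp only [jb]
            rw [abs_of_nonneg hs0, abs_of_nonneg (by linarith : (0:ℝ) ≤ τ)]
            linarith
          · apply jb_mono
            rw [abs_of_nonneg hs0, abs_of_nonneg (by linarith : (0:ℝ) ≤ τ)]
            linarith
        have hInonneg : 0 ≤ (∫ l in (0:ℝ)..(s - τ),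
            jb l ^ (p/2) * phi κ τ l ^ p * ((s - τ) - l) ^ (-(1/2):ℝ)) := by
          apply intervalIntegral.integral_nonneg (by linarith : (0:ℝ) ≤ s - τ)
          intro l _
          exact inner_nonneg p κ τ (s - τ) l
        have hstep : jb τ ^ (-a) * jb (s - τ) ^ (-b) *
            (∫ l in (0:ℝ)..(s - τ),
              jb l ^ (p/2) * phi κ τ l ^ p * ((s - τ) - l) ^ (-(1/2):ℝ)) ≤
            ((2^|a| * jb s ^ (-a)) * jb (s - τ) ^ (-b)) *
              (2^|p/2| * jb s ^ (-(p/2)) * jb (2*τ - s) ^ (-ρ) * 2 *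
                jb (s - τ) ^ ((p+1)/2)) := by
          apply mul_le_mul
          · exact mul_le_mul_of_nonneg_right hWa (jb_rpow_nonneg _ _)
          · exact hIR3
          · exact hInonneg
          · exact mul_nonneg
              (mul_nonneg (two_rpow_pos _).le (jb_rpow_nonneg _ _)) (jb_rpow_nonneg _ _)
        have hfin : ((2^|a| * jb s ^ (-a)) * jb (s - τ) ^ (-b)) *
            (2^|p/2| * jb s ^ (-(p/2)) * jb (2*τ - s) ^ (-ρ) * 2 *
              jb (s - τ) ^ ((p+1)/2)) = H τ := by
          have hjbs : jb s ^ (-a) * jb s ^ (-(p/2)) = jb s ^ (-(a + p/2)) := by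
            rw [jb_rpow_mul_rpow, show (-a + -(p/2) : ℝ) = -(a + p/2) by ring]
          have hjbT : jb (s - τ) ^ (-b) * jb (s - τ) ^ ((p+1)/2) =
              jb (s - τ) ^ ((p+1)/2 - b) := by
            rw [jb_rpow_mul_rpow, show (-b + (p+1)/2 : ℝ) = (p+1)/2 - b by ring]
          simp only [hHdef, if_neg hcase, hH₃, hc₃]
          rw [← hjbs, ← hjbT]; ring
        rw [← hfin]
        exact hstep
  -- Step C : compute / bound ∫ H
  have hsplitH : (∫ τ in Set.Ioc 0 s, H τ) =
      (∫ τ in Set.Ioc 0 (s/2), H τ) + ∫ τ in Set.Ioc (s/2) s, H τ := by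
    rw [← Set.Ioc_union_Ioc_eq_Ioc hhalf hsh]
    exact MeasureTheory.setIntegral_union (Set.Ioc_disjoint_Ioc_of_le le_rfl)
      measurableSet_Ioc hIntL hIntR
  have hL : (∫ τ in Set.Ioc 0 (s/2), H τ) ≤
      (2^|b| * C₁ * Ca + 2^|b| * C₂ * Cb) * jb s ^ E := by
    have he : (∫ τ in Set.Ioc 0 (s/2), H τ) =
        (∫ τ in (0:ℝ)..(s/2), H₁ τ) + ∫ τ in (0:ℝ)..(s/2), H₂ τ := by
      rw [MeasureTheory.setIntegral_congr_fun measurableSet_Ioc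
        (fun τ hτ => by simp only [hHdef, Pi.add_apply, if_pos hτ.2] :
          Set.EqOn H (H₁ + H₂) (Set.Ioc 0 (s/2)))]
      rw [← intervalIntegral.integral_of_le hhalf]
      exact intervalIntegral.integral_add hInt₁ hInt₂
    rw [he]
    have hB1 : (∫ τ in (0:ℝ)..(s/2), H₁ τ) ≤ 2^|b| * C₁ * Ca * jb s ^ E := by
      simp only [hH₁]
      rw [intervalIntegral.integral_const_mul]
      have := hCa' s hs0
      calc c₁ * ∫ τ in (0:ℝ)..(s/2), jb τ ^ (-a) * jb (s - 2*τ) ^ (-e₁)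
          ≤ c₁ * (Ca * jb s ^ (1 - a - e₁)) := mul_le_mul_of_nonneg_left this hc₁0
        _ = 2^|b| * C₁ * Ca * (jb s ^ (-b) * jb s ^ (1 - a - e₁)) := by
            rw [hc₁]; ring
        _ = 2^|b| * C₁ * Ca * jb s ^ E := by
            rw [jb_rpow_mul_rpow, show (-b + (1 - a - e₁) : ℝ) = E by linarith]
    have hB2 : (∫ τ in (0:ℝ)..(s/2), H₂ τ) ≤ 2^|b| * C₂ * Cb * jb s ^ E := by
      simp only [hH₂]
      rw [intervalIntegral.integral_const_mul]
      have := hCb' s hs0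
      calc c₂ * ∫ τ in (0:ℝ)..(s/2), jb τ ^ (-(a - m₂ + p/2)) * (s - 2*τ) ^ (-(1/2):ℝ)
          ≤ c₂ * (Cb * jb s ^ ((1:ℝ)/2 - (a - m₂ + p/2))) :=
            mul_le_mul_of_nonneg_left this hc₂0
        _ = 2^|b| * C₂ * Cb * (jb s ^ (-b) * jb s ^ ((1:ℝ)/2 - (a - m₂ + p/2))) := by
            rw [hc₂]; ring
        _ = 2^|b| * C₂ * Cb * jb s ^ E := by
            rw [jb_rpow_mul_rpow, show (-b + ((1:ℝ)/2 - (a - m₂ + p/2)) : ℝ) = E by linarith]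
    linarith
  have hR : (∫ τ in Set.Ioc (s/2) s, H τ) ≤ 2^|a| * 2^|p/2| * 2 * C₃ * jb s ^ E := by
    have he : (∫ τ in Set.Ioc (s/2) s, H τ) = ∫ τ in (s/2)..s, H₃ τ := by
      rw [MeasureTheory.setIntegral_congr_fun measurableSet_Ioc
        (fun τ hτ => by simp only [hHdef, if_neg (not_le.mpr hτ.1)] :
          Set.EqOn H H₃ (Set.Ioc (s/2) s))]
      rw [← intervalIntegral.integral_of_le hsh]
    rw [he]
    simp only [hH₃]
    rw [intervalIntegral.integral_const_mul]
    have hsub : (∫ τ in (s/2)..s, jb (s - τ) ^ ((p+1)/2 - b) * jb (2*τ - s) ^ (-ρ)) =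
        ∫ w in (0:ℝ)..(s/2), jb (s/2 - w) ^ (-(b - (p+1)/2)) * jb (2*w) ^ (-ρ) := by
      have h := intervalIntegral.integral_comp_add_right
        (fun τ => jb (s - τ) ^ ((p+1)/2 - b) * jb (2*τ - s) ^ (-ρ)) (s/2)
        (a := (0:ℝ)) (b := s/2)
      rw [zero_add, show s/2 + s/2 = s by ring] at h
      rw [← h]
      apply intervalIntegral.integral_congr
      intro w _
      simp only
      rw [show s - (w + s/2) = s/2 - w by ring, show 2*(w + s/2) - s = 2*w by ring,
        show ((p+1)/2 - b : ℝ) = -(b - (p+1)/2) by ring]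
    rw [hsub]
    calc c₃ * ∫ w in (0:ℝ)..(s/2), jb (s/2 - w) ^ (-(b - (p+1)/2)) * jb (2*w) ^ (-ρ)
        ≤ c₃ * (C₃ * jb s ^ (E + a + p/2)) :=
          mul_le_mul_of_nonneg_left (h3 s hs0) hc₃0
      _ = 2^|a| * 2^|p/2| * 2 * C₃ * (jb s ^ (-(a + p/2)) * jb s ^ (E + a + p/2)) := by
          rw [hc₃]; ring
      _ = 2^|a| * 2^|p/2| * 2 * C₃ * jb s ^ E := by
          rw [jb_rpow_mul_rpow, show (-(a + p/2) + (E + a + p/2) : ℝ) = E by ring]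
  calc (∫ τ in (0:ℝ)..s, jb τ ^ (-a) * jb (s - τ) ^ (-b) *
        ∫ l in (0:ℝ)..(s - τ), jb l ^ (p/2) * phi κ τ l ^ p * ((s - τ) - l) ^ (-(1/2):ℝ))
      ≤ ∫ τ in Set.Ioc 0 s, H τ := hmainmono
    _ = (∫ τ in Set.Ioc 0 (s/2), H τ) + ∫ τ in Set.Ioc (s/2) s, H τ := hsplitH
    _ ≤ (2^|b| * C₁ * Ca + 2^|b| * C₂ * Cb) * jb s ^ E +
        2^|a| * 2^|p/2| * 2 * C₃ * jb s ^ E := add_le_add hL hR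
    _ ≤ (2^|b| * C₁ * Ca + 2^|b| * C₂ * Cb + 2^|a| * 2^|p/2| * 2 * C₃ + 1) * jb s ^ E := by
        nlinarith [jb_rpow_pos s E]

set_option maxHeartbeats 2000000 in
/-- Proposition 3.9, estimate for `J_γ(t,r)`. -/
theorem estimate_J_gamma (n : ℕ) (hn : 4 ≤ n) (hne : Even n)
    (μ : ℝ) (hμ : 0 < μ) (p κ q γ : ℝ)
    (hp₁ : p0 ((n : ℝ) + μ) < p) (hp₂ : p < pFuj (((n : ℝ) + μ - 1) / 2))
    (hκ₁ : 0 < κ) (hκ₂ : κ ≤ ((n : ℝ) + μ - 1) * p / 2 - ((n : ℝ) + μ + 1) / 2)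
    (hκ₃ : κ > 2 / (p - 1) - ((n : ℝ) + μ - 1) / 2)
    (hq : q = ((n : ℝ) - 1) * p / 2 - ((n : ℝ) + 1) / 2)
    (hq₀ : -(1 / 2 : ℝ) ≤ q) (hq₁ : q ≤ ((n : ℝ) - 3) / 2)
    (hpμ : p < pFuj μ) (hγ : γ = 0 ∨ γ = 1 / 2) :
    ∃ C > 0, ∀ t : ℝ, 0 ≤ t → ∀ r : ℝ, 0 < r →
      (∫ τ in (0 : ℝ)..(max (t - r) 0),
          jb τ ^ (-(μ * (p - 1) / 2)) * jb (t - τ - r) ^ (-q - 1 / 2 - γ) *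
            ∫ l in (0 : ℝ)..(t - τ - r),
              jb l ^ (p / 2) * phi κ τ l ^ p *
                ((t - τ - r) - l) ^ (-(1 / 2 : ℝ))) ≤
        C * jb (t - r) ^ (-κ - γ) := by
  -- basic arithmetic facts
  have hn4 : (4:ℝ) ≤ (n:ℝ) := by exact_mod_cast hn
  have hγ0 : 0 ≤ γ := by rcases hγ with h | h <;> rw [h] <;> norm_num
  have hγ5 : γ ≤ 1/2 := by rcases hγ with h | h <;> rw [h] <;> norm_num
  have hp1 : 1 < p := by
    have hN1 : (0:ℝ) < (n:ℝ) + μ - 1 := by linarith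
    have hdisc : ((n:ℝ) + μ - 3) ^ 2 < ((n:ℝ) + μ) ^ 2 + 10 * ((n:ℝ) + μ) - 7 := by
      nlinarith
    have hsq : (n:ℝ) + μ - 3 < Real.sqrt (((n:ℝ) + μ) ^ 2 + 10 * ((n:ℝ) + μ) - 7) :=
      Real.lt_sqrt_of_sq_lt hdisc
    have h1 : (1:ℝ) < p0 ((n:ℝ) + μ) := by
      rw [p0]
      rw [lt_div_iff₀ (by linarith : (0:ℝ) < 2 * ((n:ℝ) + μ - 1))]
      linarith
    linarith [hp₁]
  have hp0 : (0:ℝ) ≤ p := by linarith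
  have hp2 : p ≤ 2 := by nlinarith [hq₁, hq]
  have ha0 : 0 ≤ μ * (p - 1) / 2 := div_nonneg (mul_nonneg hμ.le (by linarith)) (by norm_num)
  have ha1 : μ * (p - 1) / 2 < 1 := by
    rw [pFuj] at hpμ
    have := (lt_div_iff₀ hμ).mp (by linarith [hpμ] : p - 1 < 2 / μ)
    nlinarith
  have hb0 : 0 ≤ q + 1/2 + γ := by linarith
  have hKeq : ((n:ℝ) + μ - 1) * p / 2 - ((n:ℝ) + μ + 1) / 2 = μ * (p - 1) / 2 + q := by
    rw [hq]; ring
  have hκK : κ ≤ μ * (p - 1) / 2 + q := by linarith [hκ₂, hKeq]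
  have hstar : κ + 1 - (μ * (p - 1) / 2 + q) < κ * p := by
    have hp1' : (0:ℝ) < p - 1 := by linarith
    have h := mul_lt_mul_of_pos_right hκ₃ hp1'
    have hexp : (2 / (p - 1) - ((n:ℝ) + μ - 1) / 2) * (p - 1) =
        2 - ((n:ℝ) + μ - 1) * (p - 1) / 2 := by
      field_simp
    have hrel : ((n:ℝ) + μ - 1) * (p - 1) / 2 = μ * (p - 1) / 2 + q + 1 := by
      rw [hq]; ring
    have hκp : κ * (p - 1) = κ * p - κ := by ring
    rw [hexp, hrel, hκp] at h
    linarith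
  have hy1 : (q + 1/2 + γ) - (p + 1)/2 < 1 := by
    rw [pFuj] at hp₂
    have hN2 : (0:ℝ) < ((n:ℝ) + μ - 1) / 2 := by linarith
    have h := (lt_div_iff₀ hN2).mp (by linarith [hp₂] : p - 1 < 2 / (((n:ℝ) + μ - 1) / 2))
    -- (p-1) * ((n+μ-1)/2) < 2, hence (p-1)*(n-1) < 4
    have h2 : (p - 1) * ((n:ℝ) - 1) < 4 := by nlinarith
    nlinarith [hq]
  have hκp0 : (0:ℝ) ≤ κ * p := le_of_lt (mul_pos hκ₁ (by linarith))
  -- main case split on κ p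
  rcases le_or_gt (κ * p) 1 with hcase | hcase
  · -- Case Y : κ p ≤ 1
    have hκltK : κ < μ * (p - 1) / 2 + q := by linarith
    set K : ℝ := μ * (p - 1) / 2 + q with hK
    clear_value K
    set ρ : ℝ := min (κ * p) (max (1 + (κ - K)/2) 0) with hρ
    have hρ0 : 0 ≤ ρ := le_min hκp0 (le_max_right _ _)
    have hρκ : ρ ≤ κ * p := min_le_left _ _
    have hρ1 : ρ < 1 :=
      lt_of_le_of_lt (min_le_right _ _) (max_lt (by linarith) one_pos)
    have hρE : 1 + κ - K ≤ ρ := by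
      apply le_min (by linarith)
      exact le_trans (by linarith) (le_max_left _ _)
    clear_value ρ
    obtain ⟨C₁, hC₁, hB4'⟩ := B4 hρ1
    obtain ⟨C₂, hC₂, hB6'⟩ := B6 (show -(p/2) < 1 by linarith) hρ1
    obtain ⟨C₃, hC₃, hD3'⟩ := D3a hy1 hρ0 hρ1
    have h1 : ∀ d : ℝ, 0 ≤ d →
        (∫ u in (0:ℝ)..d, jb u ^ (-ρ) * (d - u) ^ (-(1/2):ℝ)) ≤
          C₁ * jb d ^ (-(ρ - 1/2)) := by
      intro d hd
      have := hB4' d hd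
      rwa [show ((1:ℝ)/2 - ρ : ℝ) = -(ρ - 1/2) by ring] at this
    have h2 : ∀ τ : ℝ, 0 ≤ τ →
        (∫ l in (0:ℝ)..τ, jb l ^ (p/2) * jb (τ - l) ^ (-ρ)) ≤
          C₂ * jb τ ^ (1 + p/2 - ρ) := by
      intro τ hτ
      have := hB6' τ hτ
      rw [show (1 - -(p/2) - ρ : ℝ) = 1 + p/2 - ρ by ring] at this
      simp only [neg_neg] at this
      exact this
    have h3 : ∀ s : ℝ, 0 ≤ s →
        (∫ w in (0:ℝ)..(s/2),
          jb (s/2 - w) ^ (-((q + 1/2 + γ) - (p+1)/2)) * jb (2*w) ^ (-ρ)) ≤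
          C₃ * jb s ^ ((3/2 - μ * (p - 1) / 2 - (q + 1/2 + γ) - ρ) +
            μ * (p - 1) / 2 + p/2) := by
      intro s hs
      have := hD3' s hs
      rwa [show (1 - ((q + 1/2 + γ) - (p+1)/2) - ρ : ℝ) =
        (3/2 - μ * (p - 1) / 2 - (q + 1/2 + γ) - ρ) + μ * (p - 1) / 2 + p/2 by ring] at this
    obtain ⟨C, hC0, hCb⟩ := master hp0 hκp0 hρ0 hρκ ha0 ha1 hb0
      (show ρ - 1/2 < 1 by linarith)
      (show μ * (p - 1) / 2 - (1 + p/2 - ρ) + p/2 < 1 by linarith)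
      hC₁.le hC₂.le hC₃.le h1 h2 h3
      (by ring) (by ring)
    refine ⟨C, hC0, ?_⟩
    intro t ht r hr
    rcases le_or_gt (t - r) 0 with hs | hs
    · rw [max_eq_right hs, intervalIntegral.integral_same]
      exact mul_nonneg hC0.le (jb_rpow_nonneg _ _)
    · rw [max_eq_left hs.le]
      have hconv : (∫ τ in (0 : ℝ)..(t - r),
          jb τ ^ (-(μ * (p - 1) / 2)) * jb (t - τ - r) ^ (-q - 1 / 2 - γ) *
            ∫ l in (0 : ℝ)..(t - τ - r),
              jb l ^ (p / 2) * phi κ τ l ^ p *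
                ((t - τ - r) - l) ^ (-(1 / 2 : ℝ))) =
          ∫ τ in (0 : ℝ)..(t - r),
            jb τ ^ (-(μ * (p - 1) / 2)) * jb ((t - r) - τ) ^ (-(q + 1/2 + γ)) *
              ∫ l in (0 : ℝ)..((t - r) - τ),
                jb l ^ (p / 2) * phi κ τ l ^ p *
                  (((t - r) - τ) - l) ^ (-(1 / 2 : ℝ)) := by
        apply intervalIntegral.integral_congr
        intro τ _
        simp only
        rw [show t - τ - r = (t - r) - τ by ring,
          show (-q - 1/2 - γ : ℝ) = -(q + 1/2 + γ) by ring]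
      rw [hconv]
      have hE : (3/2 - μ * (p - 1) / 2 - (q + 1/2 + γ) - ρ) ≤ -κ - γ := by linarith
      calc _ ≤ C * jb (t - r) ^ (3/2 - μ * (p - 1) / 2 - (q + 1/2 + γ) - ρ) := hCb (t - r) hs
        _ ≤ C * jb (t - r) ^ (-κ - γ) :=
            mul_le_mul_of_nonneg_left (jb_rpow_le_rpow_exp hE) hC0.le
  · -- Case X : κ p > 1
    obtain ⟨C₁, hC₁, hB5'⟩ := B5 hcase
    obtain ⟨C₂, hC₂, hB7'⟩ := B7 (show -(p/2) < 1 by linarith) hcase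
    obtain ⟨C₃, hC₃, hD3'⟩ := D3b hy1 hcase
    have h1 : ∀ d : ℝ, 0 ≤ d →
        (∫ u in (0:ℝ)..d, jb u ^ (-(κ*p)) * (d - u) ^ (-(1/2):ℝ)) ≤
          C₁ * jb d ^ (-(1/2 : ℝ)) := by
      intro d hd
      exact hB5' d hd
    have h2 : ∀ τ : ℝ, 0 ≤ τ →
        (∫ l in (0:ℝ)..τ, jb l ^ (p/2) * jb (τ - l) ^ (-(κ*p))) ≤
          C₂ * jb τ ^ (p/2) := by
      intro τ hτ
      have hrefl : (∫ l in (0:ℝ)..τ, jb l ^ (p/2) * jb (τ - l) ^ (-(κ*p))) =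
          ∫ w in (0:ℝ)..τ, jb (τ - w) ^ (p/2) * jb w ^ (-(κ*p)) := by
        have h := intervalIntegral.integral_comp_sub_left
          (fun w => jb (τ - w) ^ (p/2) * jb w ^ (-(κ*p))) τ (a := (0:ℝ)) (b := τ)
        rw [sub_self, sub_zero] at h
        rw [← h]
        apply intervalIntegral.integral_congr
        intro x _
        simp only
        rw [show τ - (τ - x) = x by ring]
      rw [hrefl]
      have := hB7' τ hτ
      simp only [neg_neg] at this
      exact this
    have h3 : ∀ s : ℝ, 0 ≤ s →
        (∫ w in (0:ℝ)..(s/2),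
          jb (s/2 - w) ^ (-((q + 1/2 + γ) - (p+1)/2)) * jb (2*w) ^ (-(κ*p))) ≤
          C₃ * jb s ^ ((1/2 - μ * (p - 1) / 2 - (q + 1/2 + γ)) +
            μ * (p - 1) / 2 + p/2) := by
      intro s hs
      have heq : ((1/2 - μ * (p - 1) / 2 - (q + 1/2 + γ)) + μ * (p - 1) / 2 + p/2 : ℝ) =
          -((q + 1/2 + γ) - (p+1)/2) := by ring
      rw [heq]
      exact hD3' s hs
    obtain ⟨C, hC0, hCb⟩ := master hp0 hκp0 hκp0 (le_refl (κ*p)) ha0 ha1 hb0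
      (show (1/2 : ℝ) < 1 by norm_num)
      (show μ * (p - 1) / 2 - p/2 + p/2 < 1 by linarith)
      hC₁.le hC₂.le hC₃.le h1 h2 h3
      (by ring) (by ring)
    refine ⟨C, hC0, ?_⟩
    intro t ht r hr
    rcases le_or_gt (t - r) 0 with hs | hs
    · rw [max_eq_right hs, intervalIntegral.integral_same]
      exact mul_nonneg hC0.le (jb_rpow_nonneg _ _)
    · rw [max_eq_left hs.le]
      have hconv : (∫ τ in (0 : ℝ)..(t - r),
          jb τ ^ (-(μ * (p - 1) / 2)) * jb (t - τ - r) ^ (-q - 1 / 2 - γ) *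
            ∫ l in (0 : ℝ)..(t - τ - r),
              jb l ^ (p / 2) * phi κ τ l ^ p *
                ((t - τ - r) - l) ^ (-(1 / 2 : ℝ))) =
          ∫ τ in (0 : ℝ)..(t - r),
            jb τ ^ (-(μ * (p - 1) / 2)) * jb ((t - r) - τ) ^ (-(q + 1/2 + γ)) *
              ∫ l in (0 : ℝ)..((t - r) - τ),
                jb l ^ (p / 2) * phi κ τ l ^ p *
                  (((t - r) - τ) - l) ^ (-(1 / 2 : ℝ)) := by
        apply intervalIntegral.integral_congr
        intro τ _
        simp only
        rw [show t - τ - r = (t - r) - τ by ring,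
          show (-q - 1/2 - γ : ℝ) = -(q + 1/2 + γ) by ring]
      rw [hconv]
      have hE : (1/2 - μ * (p - 1) / 2 - (q + 1/2 + γ)) ≤ -κ - γ := by linarith
      calc _ ≤ C * jb (t - r) ^ (1/2 - μ * (p - 1) / 2 - (q + 1/2 + γ)) := hCb (t - r) hs
        _ ≤ C * jb (t - r) ^ (-κ - γ) :=
            mul_le_mul_of_nonneg_left (jb_rpow_le_rpow_exp hE) hC0.le
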